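/- arXiv:2408.05509 — 10 statements merged into one kernel-verified Lean document; each statement's English description precedes it below -/
import Mathlib

section
/- Let F be a field, let C be a k-dimensional linear code of length n over F, and let G be a k×n generator matrix for C (i.e., the rows of G span C). Then C is an LCED code if and only if there exists an n×n permutation matrix P such that the k×k matrix G·P·Gᵀ is invertible. -/
open Matrix

/-- The permutation matrix of `σ`: the `(i, j)` entry is `1` if `σ j = i` and `0` otherwise. -/
def permMat (F : Type*) [Zero F] [One F] {n : Type*} [DecidableEq n]
    (σ : Equiv.Perm n) : Matrix n n F :=
  Matrix.of fun i j => if σ j = i then 1 else 0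

/-- A matrix `G` over a field is an LCED matrix if there is a permutation matrix `P`
such that `G * P * Gᵀ` is invertible. -/
def IsLCEDMatrix {F : Type*} [Field F] {k n : Type*} [Fintype k] [Fintype n]
    [DecidableEq k] [DecidableEq n] (G : Matrix k n F) : Prop :=
  ∃ σ : Equiv.Perm n, IsUnit (G * permMat F σ * Gᵀ)

/-- The dual code of `C`: all vectors orthogonal (w.r.t. the standard bilinear form)
to every codeword of `C`. -/
def dualCode {F : Type*} [Field F] {n : ℕ} (C : Submodule F (Fin n → F)) :
    Submodule F (Fin n → F) where
  carrier := {x | ∀ c ∈ C, ∑ i, x i * c i = 0}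
  add_mem' := by
    intro a b ha hb c hc
    simp only [Set.mem_setOf_eq] at *
    simp [add_mul, Finset.sum_add_distrib, ha c hc, hb c hc]
  zero_mem' := by
    intro c hc
    simp
  smul_mem' := by
    intro t a ha c hc
    simp only [Set.mem_setOf_eq] at *
    simp [smul_eq_mul, mul_assoc, ← Finset.mul_sum, ha c hc]

/-- `C` is an LCED (linear complementary equi-dual) code if there is a linear code `D`
permutation equivalent to the dual code `C⊥` such that `Fⁿ = C ⊕ D`. -/
def IsLCEDCode {F : Type*} [Field F] {n : ℕ} (C : Submodule F (Fin n → F)) : Prop :=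
  ∃ D : Submodule F (Fin n → F),
    (∃ σ : Equiv.Perm (Fin n), ∀ x : Fin n → F, x ∈ D ↔ (fun j => x (σ j)) ∈ dualCode C) ∧
    IsCompl C D

lemma mul_permMat {F : Type*} [Field F] {k n : Type*} [Fintype k] [Fintype n]
    [DecidableEq n] (G : Matrix k n F) (σ : Equiv.Perm n) (m : k) (j : n) :
    (G * permMat F σ) m j = G m (σ j) := by
  simp only [mul_apply, permMat, of_apply, mul_ite, mul_one, mul_zero]
  rw [Finset.sum_ite_eq]
  simp

lemma permMat_entry {F : Type*} [Field F] {k n : Type*} [Fintype k] [Fintype n]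
    [DecidableEq n] (G : Matrix k n F) (σ : Equiv.Perm n) (m i : k) :
    (G * permMat F σ * Gᵀ) m i = ∑ j, G m (σ j) * G i j := by
  rw [mul_apply]
  simp only [mul_permMat, transpose_apply]

lemma vecMul_perm_key {F : Type*} [Field F] {k n : Type*} [Fintype k] [Fintype n]
    [DecidableEq n] (G : Matrix k n F) (σ : Equiv.Perm n) (v : k → F) (i : k) :
    (v ᵥ* (G * permMat F σ * Gᵀ)) i = ∑ j, (v ᵥ* G) (σ j) * G i j := by
  simp only [vecMul, dotProduct, permMat_entry, Finset.mul_sum]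
  rw [Finset.sum_comm]
  refine Finset.sum_congr rfl fun j _ => ?_
  rw [Finset.sum_mul]
  exact Finset.sum_congr rfl fun m _ => by ring

lemma vecMul_eq_sum' {F : Type*} [Field F] {k n : Type*} [Fintype k] [Fintype n]
    (G : Matrix k n F) (v : k → F) : v ᵥ* G = ∑ i, v i • G i := by
  funext j
  simp [vecMul, dotProduct, Finset.sum_apply]

/-- `C` (of dimension `k`, with `k × n` generator matrix `G`) is an LCED code
iff `G * P * Gᵀ` is invertible for some permutation matrix `P`. -/
theorem stmt0 {F : Type*} [Field F] {k n : ℕ} (C : Submodule F (Fin n → F))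
    (G : Matrix (Fin k) (Fin n) F)
    (hspan : Submodule.span F (Set.range fun i => G i) = C)
    (hdim : Module.finrank F C = k) :
    IsLCEDCode C ↔ ∃ σ : Equiv.Perm (Fin n), IsUnit (G * permMat F σ * Gᵀ) := by
  classical
  have hindep : LinearIndependent F (fun i => G i) := by
    rw [linearIndependent_iff_card_eq_finrank_span, Set.finrank, hspan, hdim]
    simp
  have hmemC : ∀ x, x ∈ C ↔ ∃ v : Fin k → F, x = v ᵥ* G := by
    intro x
    rw [← hspan, Submodule.mem_span_range_iff_exists_fun]
    constructor
    · rintro ⟨c, hc⟩; exact ⟨c, by rw [vecMul_eq_sum', hc]⟩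
    · rintro ⟨v, rfl⟩; exact ⟨v, (vecMul_eq_sum' G v).symm⟩
  have hdualmem : ∀ x, x ∈ dualCode C ↔ ∀ i, ∑ j, x j * G i j = 0 := by
    intro x
    constructor
    · intro h i
      exact h (G i) (hspan ▸ Submodule.subset_span ⟨i, rfl⟩)
    · intro h c hc
      obtain ⟨v, rfl⟩ := (hmemC c).1 hc
      show ∑ j, x j * (v ᵥ* G) j = 0
      simp only [vecMul, dotProduct, Finset.mul_sum]
      rw [Finset.sum_comm]
      refine Finset.sum_eq_zero fun m _ => ?_
      calc ∑ j, x j * (v m * G m j) = v m * ∑ j, x j * G m j := by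
            rw [Finset.mul_sum]; exact Finset.sum_congr rfl fun j _ => by ring
        _ = 0 := by rw [h m, mul_zero]
  constructor
  · rintro ⟨D, ⟨σ, hD⟩, hcompl⟩
    refine ⟨σ, ?_⟩
    rw [Matrix.isUnit_iff_isUnit_det, isUnit_iff_ne_zero]
    intro hdet
    obtain ⟨v, hv, hv0⟩ := Matrix.exists_vecMul_eq_zero_iff.2 hdet
    have hxC : v ᵥ* G ∈ C := (hmemC _).2 ⟨v, rfl⟩
    have hxD : v ᵥ* G ∈ D := by
      rw [hD, hdualmem]
      intro i
      have h := congrFun hv0 i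
      rw [vecMul_perm_key] at h
      simpa using h
    have hz : v ᵥ* G = 0 :=
      (Submodule.disjoint_def.1 hcompl.disjoint) _ hxC hxD
    apply hv
    rw [vecMul_eq_sum'] at hz
    exact funext (Fintype.linearIndependent_iff.1 hindep v hz)
  · rintro ⟨σ, hu⟩
    set e : (Fin n → F) ≃ₗ[F] (Fin n → F) := LinearEquiv.funCongrLeft F F σ with he
    have happ : ∀ x : Fin n → F, e x = fun j => x (σ j) := fun x => rfl
    set Dm : Submodule F (Fin n → F) := Submodule.comap e.toLinearMap (dualCode C) with hDm
    have hmemD : ∀ x : Fin n → F, x ∈ Dm ↔ (fun j => x (σ j)) ∈ dualCode C := by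
      intro x
      rw [hDm, Submodule.mem_comap, LinearEquiv.coe_coe, happ]
    have hdisj : Disjoint C Dm := by
      rw [Submodule.disjoint_def]
      intro x hxC hxD
      obtain ⟨v, rfl⟩ := (hmemC x).1 hxC
      have hdd := (hdualmem _).1 ((hmemD _).1 hxD)
      have hzero : v ᵥ* (G * permMat F σ * Gᵀ) = 0 := by
        funext i
        rw [vecMul_perm_key]
        simpa using hdd i
      have hdet : (G * permMat F σ * Gᵀ).det ≠ 0 := by
        rw [← isUnit_iff_ne_zero, ← Matrix.isUnit_iff_isUnit_det]
        exact hu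
      have hv : v = 0 := by
        by_contra hv
        exact hdet (Matrix.exists_vecMul_eq_zero_iff.1 ⟨v, hv, hzero⟩)
      rw [hv, zero_vecMul]
    have hker : dualCode C = LinearMap.ker (Matrix.mulVecLin G) := by
      ext x
      rw [hdualmem, LinearMap.mem_ker, Matrix.mulVecLin_apply, funext_iff]
      refine forall_congr' fun i => ?_
      simp only [Matrix.mulVec, dotProduct, Pi.zero_apply]
      constructor
      · intro h; rw [← h]; exact Finset.sum_congr rfl fun j _ => mul_comm _ _
      · intro h; rw [← h]; exact Finset.sum_congr rfl fun j _ => mul_comm _ _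
    have hrank : Matrix.rank G = k := by
      rw [Matrix.rank_eq_finrank_span_row,
        show Set.range G.row = Set.range (fun i => G i) from rfl, hspan, hdim]
    have hsum : k + Module.finrank F (dualCode C) = n := by
      have h := LinearMap.finrank_range_add_finrank_ker (Matrix.mulVecLin G)
      rw [← hker] at h
      rw [Matrix.rank] at hrank
      rw [hrank] at h
      simpa using h
    have hfrD : Module.finrank F Dm = Module.finrank F (dualCode C) := by
      rw [hDm, Submodule.comap_equiv_eq_map_symm]
      exact LinearEquiv.finrank_map_eq e.symm (dualCode C)
    have hsup : C ⊔ Dm = ⊤ := by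
      apply Submodule.eq_top_of_finrank_eq
      have h1 := Submodule.finrank_sup_add_finrank_inf_eq C Dm
      rw [disjoint_iff.1 hdisj] at h1
      simp only [finrank_bot, add_zero] at h1
      rw [h1, hdim, hfrD, hsum]
      simp [Module.finrank_pi]
    exact ⟨Dm, ⟨σ, hmemD⟩, ⟨hdisj, codisjoint_iff.2 hsup⟩⟩
end

section
/- Let F be a field of characteristic 2, let g(x) = Σ_{i=0}^{r} g_i·x^i be a monic polynomial of degree r over F with g_0 ≠ 0, and set n = 3r. Let g*(x) = x^r·g(1/x) be the reciprocal polynomial of g, and suppose that g(x)·g*(x) = g_0 + g(1)²·x^r + g_0·x^{2r}. Let G be the 2r×n matrix whose s-th row (for 0 ≤ s ≤ 2r−1) is the vector (0,…,0, g_0, g_1, …, g_r, 0,…,0) with g_0 in position s (i.e., the s-fold right cyclic shift of the coefficient vector of g padded with zeros). Then G is an LCED matrix; consequently the cyclic code of length n generated by g, which has generator matrix G, is an LCED code. -/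
open Matrix

/-- The `2r × 3r` matrix whose `s`-th row is the `s`-fold right shift of the coefficient
vector of `g`, padded with zeros. -/
def shiftMat {F : Type*} [Field F] (g : Polynomial F) (r : ℕ) :
    Matrix (Fin (2 * r)) (Fin (3 * r)) F :=
  Matrix.of fun s j => if (s : ℕ) ≤ (j : ℕ) then g.coeff ((j : ℕ) - (s : ℕ)) else 0



section LCEDProofAux

open Polynomial Finset

namespace LCEDaux
variable {F : Type*} [Field F]

def Ent (g : Polynomial F) (j s : ℕ) : F := if s ≤ j then g.coeff (j - s) else 0

def swapFn (r j : ℕ) : ℕ := if j < r then j + r else if j < 2 * r then j - r else j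

lemma swapFn_lt {r j : ℕ} (h : j < 3 * r) : swapFn r j < 3 * r := by
  unfold swapFn; split_ifs <;> omega

def swapPerm (r : ℕ) : Equiv.Perm (Fin (3 * r)) :=
  Function.Involutive.toPerm (fun j => ⟨swapFn r j.1, swapFn_lt j.2⟩)
    (fun j => by
      ext
      show swapFn r (swapFn r j.1) = j.1
      have := j.2
      unfold swapFn
      split_ifs <;> omega)

lemma swapFn_low {r j : ℕ} (h : j < r) : swapFn r j = j + r := by
  unfold swapFn; split_ifs <;> omega

lemma swapFn_mid {r j : ℕ} (h : j < r) : swapFn r (r + j) = j := by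
  unfold swapFn; split_ifs <;> omega

lemma swapFn_high {r j : ℕ} : swapFn r (r + (r + j)) = r + (r + j) := by
  unfold swapFn; split_ifs <;> omega

lemma mul_permMat_apply {n m : Type*} [DecidableEq n] [Fintype n] [Fintype m]
    (G : Matrix m n F) (σ : Equiv.Perm n) (s : m) (j : n) :
    (G * permMat F σ) s j = G s (σ j) := by
  simp [Matrix.mul_apply, permMat, mul_ite, Finset.sum_ite_eq]

lemma Mentry (g : Polynomial F) (r : ℕ) (a b : Fin (2 * r)) :
    (shiftMat g r * permMat F (swapPerm r) * (shiftMat g r)ᵀ) a b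
      = (∑ j ∈ Finset.range r, Ent g (j + r) a.1 * Ent g j b.1)
      + (∑ j ∈ Finset.range r, Ent g j a.1 * Ent g (r + j) b.1)
      + (∑ j ∈ Finset.range r, Ent g (r + (r + j)) a.1 * Ent g (r + (r + j)) b.1) := by
  rw [Matrix.mul_apply]
  have h1 : ∀ j : Fin (3 * r), (shiftMat g r * permMat F (swapPerm r)) a j * (shiftMat g r)ᵀ j b
      = Ent g (swapFn r j.1) a.1 * Ent g j.1 b.1 := by
    intro j
    rw [mul_permMat_apply]
    rfl
  rw [Finset.sum_congr rfl (fun j _ => h1 j)]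
  rw [Fin.sum_univ_eq_sum_range (fun j => Ent g (swapFn r j) a.1 * Ent g j b.1) (3 * r)]
  rw [show Finset.range (3 * r) = Finset.range (r + (r + r)) by congr 1; ring,
    Finset.sum_range_add, Finset.sum_range_add]
  rw [add_assoc]
  congr 1
  · exact Finset.sum_congr rfl fun j hj =>
      by rw [swapFn_low (Finset.mem_range.mp hj)]
  congr 1
  · exact Finset.sum_congr rfl fun j hj =>
      by rw [swapFn_mid (Finset.mem_range.mp hj)]
  · exact Finset.sum_congr rfl fun j _ => by rw [swapFn_high]


/-- correlation lemma -/
lemma corr_eq {r : ℕ} (hr : 0 < r) (g : Polynomial F) (hdeg : g.natDegree = r)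
    (hcond : g * g.reverse =
      Polynomial.C (g.coeff 0) + Polynomial.C (g.eval 1 ^ 2) * Polynomial.X ^ r +
        Polynomial.C (g.coeff 0) * Polynomial.X ^ (2 * r))
    (e : ℕ) (he : 1 ≤ e) :
    ∑ j ∈ Finset.range r, g.coeff j * g.coeff (j + e) =
      if e = r then g.coeff 0 else 0 := by
  rcases le_or_gt e r with h | h
  · have key : (g * g.reverse).coeff (r - e) =
        ∑ j ∈ Finset.range r, g.coeff j * g.coeff (j + e) := by
      rw [Polynomial.coeff_mul, Finset.Nat.sum_antidiagonal_eq_sum_range_succ_mk]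
      have step1 : ∑ k ∈ Finset.range (r - e + 1), g.coeff k * g.reverse.coeff (r - e - k) =
          ∑ k ∈ Finset.range (r - e + 1), g.coeff k * g.coeff (k + e) := by
        apply Finset.sum_congr rfl
        intro k hk
        rw [Finset.mem_range] at hk
        rw [Polynomial.coeff_reverse, hdeg,
          Polynomial.revAt_le (show r - e - k ≤ r by omega)]
        rw [show r - (r - e - k) = k + e by omega]
      rw [step1]
      apply Finset.sum_subset (Finset.range_subset_range.mpr (by omega : r - e + 1 ≤ r))
      intro k hk hk2
      rw [Finset.mem_range] at hk
      simp only [Finset.mem_range, not_lt] at hk2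
      rw [Polynomial.coeff_eq_zero_of_natDegree_lt
        (show g.natDegree < k + e by omega), mul_zero]
    rw [← key, hcond]
    simp only [Polynomial.coeff_add, Polynomial.coeff_C, Polynomial.coeff_C_mul,
      Polynomial.coeff_X_pow]
    split_ifs <;> first | omega | ring
  · rw [Finset.sum_eq_zero, if_neg (by omega)]
    intro j hj
    rw [Polynomial.coeff_eq_zero_of_natDegree_lt
      (show g.natDegree < j + e by omega), mul_zero]

/-- row-column sum lemma -/
lemma rowcol {r : ℕ} (hr : 0 < r) (g : Polynomial F) (hdeg : g.natDegree = r)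
    (hcond : g * g.reverse =
      Polynomial.C (g.coeff 0) + Polynomial.C (g.eval 1 ^ 2) * Polynomial.X ^ r +
        Polynomial.C (g.coeff 0) * Polynomial.X ^ (2 * r))
    {s t : ℕ} (hs : s < r) (ht : t < r) :
    ∑ j ∈ Finset.range r, g.coeff (j + r - s) * Ent g j t =
      if s = t then g.coeff 0 else 0 := by
  rw [show Finset.range r = Finset.range (t + (r - t)) by congr 1; omega,
    Finset.sum_range_add]
  have h1 : ∑ j ∈ Finset.range t, g.coeff (j + r - s) * Ent g j t = 0 := by
    apply Finset.sum_eq_zero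
    intro j hj
    rw [Finset.mem_range] at hj
    rw [Ent, if_neg (show ¬ t ≤ j by omega), mul_zero]
  rw [h1, zero_add]
  have h2 : ∀ i ∈ Finset.range (r - t), g.coeff (t + i + r - s) * Ent g (t + i) t =
      g.coeff i * g.coeff (i + (r + t - s)) := by
    intro i hi
    rw [Ent, if_pos (show t ≤ t + i by omega)]
    rw [show t + i - t = i by omega, show t + i + r - s = i + (r + t - s) by omega, mul_comm]
  rw [Finset.sum_congr rfl h2]
  have h3 : ∑ i ∈ Finset.range (r - t), g.coeff i * g.coeff (i + (r + t - s)) =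
      ∑ i ∈ Finset.range r, g.coeff i * g.coeff (i + (r + t - s)) := by
    apply Finset.sum_subset (Finset.range_subset_range.mpr (by omega))
    intro k hk hk2
    rw [Finset.mem_range] at hk
    simp only [Finset.mem_range, not_lt] at hk2
    rw [Polynomial.coeff_eq_zero_of_natDegree_lt
      (show g.natDegree < k + (r + t - s) by omega), mul_zero]
  rw [h3, corr_eq hr g hdeg hcond _ (show 1 ≤ r + t - s by omega),
    if_congr (show r + t - s = r ↔ s = t by omega) rfl rfl]


lemma blockTL [CharP F 2] {r : ℕ} (hr : 0 < r) (g : Polynomial F) (hdeg : g.natDegree = r)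
    (hcond : g * g.reverse =
      Polynomial.C (g.coeff 0) + Polynomial.C (g.eval 1 ^ 2) * Polynomial.X ^ r +
        Polynomial.C (g.coeff 0) * Polynomial.X ^ (2 * r))
    {s t : ℕ} (hs : s < r) (ht : t < r) :
    (∑ j ∈ Finset.range r, Ent g (j + r) s * Ent g j t)
      + (∑ j ∈ Finset.range r, Ent g j s * Ent g (r + j) t)
      + (∑ j ∈ Finset.range r, Ent g (r + (r + j)) s * Ent g (r + (r + j)) t) = 0 := by
  have e1 : ∑ j ∈ Finset.range r, Ent g (j + r) s * Ent g j t =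
      if s = t then g.coeff 0 else 0 := by
    rw [← rowcol hr g hdeg hcond hs ht]
    apply Finset.sum_congr rfl
    intro j hj
    rw [Ent, if_pos (show s ≤ j + r by omega)]
  have e2 : ∑ j ∈ Finset.range r, Ent g j s * Ent g (r + j) t =
      if t = s then g.coeff 0 else 0 := by
    rw [← rowcol hr g hdeg hcond ht hs]
    apply Finset.sum_congr rfl
    intro j hj
    have h' : Ent g (r + j) t = g.coeff (j + r - t) := by
      rw [Ent, if_pos (show t ≤ r + j by omega), show r + j - t = j + r - t by omega]
    rw [h', mul_comm]
  have e3 : ∑ j ∈ Finset.range r, Ent g (r + (r + j)) s * Ent g (r + (r + j)) t = 0 := by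
    apply Finset.sum_eq_zero
    intro j hj
    have h' : Ent g (r + (r + j)) t = 0 := by
      rw [Ent, if_pos (show t ≤ r + (r + j) by omega),
        Polynomial.coeff_eq_zero_of_natDegree_lt (show g.natDegree < r + (r + j) - t by omega)]
    rw [h', mul_zero]
  rw [e1, e2, e3, add_zero]
  rcases eq_or_ne s t with rfl | hst
  · simp [CharTwo.add_self_eq_zero]
  · rw [if_neg hst, if_neg (Ne.symm hst), add_zero]

lemma blockTR {r : ℕ} (g : Polynomial F) (hdeg : g.natDegree = r)
    {s t : ℕ} (hs : s < r) (ht : t < r) :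
    (∑ j ∈ Finset.range r, Ent g (j + r) s * Ent g j (r + t))
      + (∑ j ∈ Finset.range r, Ent g j s * Ent g (r + j) (r + t))
      + (∑ j ∈ Finset.range r, Ent g (r + (r + j)) s * Ent g (r + (r + j)) (r + t))
      = ∑ j ∈ Finset.range r, Ent g j s * Ent g j t := by
  have e1 : ∑ j ∈ Finset.range r, Ent g (j + r) s * Ent g j (r + t) = 0 := by
    apply Finset.sum_eq_zero
    intro j hj
    rw [Finset.mem_range] at hj
    have h' : Ent g j (r + t) = 0 := by
      rw [Ent, if_neg (show ¬ r + t ≤ j by omega)]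
    rw [h', mul_zero]
  have e2 : ∑ j ∈ Finset.range r, Ent g j s * Ent g (r + j) (r + t) =
      ∑ j ∈ Finset.range r, Ent g j s * Ent g j t := by
    apply Finset.sum_congr rfl
    intro j hj
    have h' : Ent g (r + j) (r + t) = Ent g j t := by
      simp only [Ent, Nat.add_le_add_iff_left, Nat.add_sub_add_left]
    rw [h']
  have e3 : ∑ j ∈ Finset.range r, Ent g (r + (r + j)) s * Ent g (r + (r + j)) (r + t) = 0 := by
    apply Finset.sum_eq_zero
    intro j hj
    have h' : Ent g (r + (r + j)) s = 0 := by
      rw [Ent, if_pos (show s ≤ r + (r + j) by omega),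
        Polynomial.coeff_eq_zero_of_natDegree_lt (show g.natDegree < r + (r + j) - s by omega)]
    rw [h', zero_mul]
  rw [e1, e2, e3, zero_add, add_zero]

lemma blockBL {r : ℕ} (g : Polynomial F) (hdeg : g.natDegree = r)
    {s t : ℕ} (hs : s < r) (ht : t < r) :
    (∑ j ∈ Finset.range r, Ent g (j + r) (r + s) * Ent g j t)
      + (∑ j ∈ Finset.range r, Ent g j (r + s) * Ent g (r + j) t)
      + (∑ j ∈ Finset.range r, Ent g (r + (r + j)) (r + s) * Ent g (r + (r + j)) t)
      = ∑ j ∈ Finset.range r, Ent g j s * Ent g j t := by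
  have e1 : ∑ j ∈ Finset.range r, Ent g (j + r) (r + s) * Ent g j t =
      ∑ j ∈ Finset.range r, Ent g j s * Ent g j t := by
    apply Finset.sum_congr rfl
    intro j hj
    have h' : Ent g (j + r) (r + s) = Ent g j s := by
      rw [show j + r = r + j from Nat.add_comm j r]
      simp only [Ent, Nat.add_le_add_iff_left, Nat.add_sub_add_left]
    rw [h']
  have e2 : ∑ j ∈ Finset.range r, Ent g j (r + s) * Ent g (r + j) t = 0 := by
    apply Finset.sum_eq_zero
    intro j hj
    rw [Finset.mem_range] at hj
    have h' : Ent g j (r + s) = 0 := by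
      rw [Ent, if_neg (show ¬ r + s ≤ j by omega)]
    rw [h', zero_mul]
  have e3 : ∑ j ∈ Finset.range r, Ent g (r + (r + j)) (r + s) * Ent g (r + (r + j)) t = 0 := by
    apply Finset.sum_eq_zero
    intro j hj
    have h' : Ent g (r + (r + j)) t = 0 := by
      rw [Ent, if_pos (show t ≤ r + (r + j) by omega),
        Polynomial.coeff_eq_zero_of_natDegree_lt (show g.natDegree < r + (r + j) - t by omega)]
    rw [h', mul_zero]
  rw [e1, e2, e3, add_zero, add_zero]

end LCEDaux

open LCEDaux in
lemma lced_matrix {F : Type*} [Field F] [CharP F 2] {r : ℕ} (g : Polynomial F)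
    (hg : g.Monic) (hdeg : g.natDegree = r) (h0 : g.coeff 0 ≠ 0)
    (hcond : g * g.reverse =
      Polynomial.C (g.coeff 0) + Polynomial.C (g.eval 1 ^ 2) * Polynomial.X ^ r +
        Polynomial.C (g.coeff 0) * Polynomial.X ^ (2 * r)) :
    IsLCEDMatrix (shiftMat g r) := by
  rcases Nat.eq_zero_or_pos r with rfl | hr
  · refine ⟨1, ?_⟩
    have h1 : (shiftMat g 0 * permMat F 1 * (shiftMat g 0)ᵀ) = 1 := by
      ext i j
      exact absurd i.isLt (by omega)
    rw [h1]
    exact isUnit_one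
  refine ⟨swapPerm r, ?_⟩
  classical
  let K : Matrix (Fin r) (Fin r) F := Matrix.of fun j s => Ent g j.1 s.1
  let e : Fin r ⊕ Fin r ≃ Fin (2 * r) := finSumFinEquiv.trans (finCongr (two_mul r).symm)
  have hval_l : ∀ s : Fin r, ((e (Sum.inl s)) : ℕ) = s.1 := fun s => by
    simp [e, finCongr_apply]
  have hval_r : ∀ s : Fin r, ((e (Sum.inr s)) : ℕ) = r + s.1 := fun s => by
    simp [e, finCongr_apply]
    omega
  set M := shiftMat g r * permMat F (swapPerm r) * (shiftMat g r)ᵀ with hMdef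
  let Cb : Matrix (Fin r) (Fin r) F :=
    Matrix.of fun s t => M (e (Sum.inr s)) (e (Sum.inr t))
  have hKmul : ∀ s t : Fin r,
      (Kᵀ * K) s t = ∑ j ∈ Finset.range r, Ent g j s.1 * Ent g j t.1 := by
    intro s t
    simp only [Matrix.mul_apply, Matrix.transpose_apply, K, Matrix.of_apply]
    exact Fin.sum_univ_eq_sum_range (fun j => Ent g j s.1 * Ent g j t.1) r
  have hblocks : M.submatrix e e = Matrix.fromBlocks 0 (Kᵀ * K) (Kᵀ * K) Cb := by
    ext p q
    rcases p with a | a <;> rcases q with b | b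
    · rw [Matrix.submatrix_apply, Matrix.fromBlocks_apply₁₁, hMdef, Mentry g r,
        hval_l a, hval_l b, Matrix.zero_apply]
      exact blockTL hr g hdeg hcond a.isLt b.isLt
    · rw [Matrix.submatrix_apply, Matrix.fromBlocks_apply₁₂, hMdef, Mentry g r,
        hval_l a, hval_r b, hKmul]
      exact blockTR g hdeg a.isLt b.isLt
    · rw [Matrix.submatrix_apply, Matrix.fromBlocks_apply₂₁, hMdef, Mentry g r,
        hval_r a, hval_l b, hKmul]
      exact blockBL g hdeg a.isLt b.isLt
    · rw [Matrix.submatrix_apply, Matrix.fromBlocks_apply₂₂]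
      rfl
  rw [Matrix.isUnit_iff_isUnit_det, ← Matrix.det_submatrix_equiv_self e, hblocks]
  have hfact : Matrix.fromBlocks (0 : Matrix (Fin r) (Fin r) F) (Kᵀ * K) (Kᵀ * K) Cb =
      (Matrix.fromBlocks 0 1 1 0 : Matrix (Fin r ⊕ Fin r) (Fin r ⊕ Fin r) F) *
        Matrix.fromBlocks (Kᵀ * K) Cb 0 (Kᵀ * K) := by
    rw [Matrix.fromBlocks_multiply]
    simp
  rw [hfact, Matrix.det_mul]
  have hswap : (Matrix.fromBlocks 0 1 1 0 : Matrix (Fin r ⊕ Fin r) (Fin r ⊕ Fin r) F) *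
      (Matrix.fromBlocks 0 1 1 0 : Matrix (Fin r ⊕ Fin r) (Fin r ⊕ Fin r) F) = 1 := by
    rw [Matrix.fromBlocks_multiply]
    simp [Matrix.fromBlocks_one]
  have hu : IsUnit (g.coeff 0) := isUnit_iff_ne_zero.mpr h0
  have hK : K.det = g.coeff 0 ^ r := by
    have htri : Kᵀ.BlockTriangular id := by
      intro i j hij
      simp only [Matrix.transpose_apply, K, Matrix.of_apply, Ent]
      rw [if_neg (Nat.not_le.mpr (show (j : ℕ) < (i : ℕ) from hij))]
    rw [← Matrix.det_transpose, Matrix.det_of_upperTriangular htri]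
    have hdiag : ∀ i : Fin r, Kᵀ i i = g.coeff 0 := by
      intro i
      simp [K, Ent, Nat.sub_self]
    rw [Finset.prod_congr rfl (fun i _ => hdiag i)]
    simp
  apply IsUnit.mul
  · exact IsUnit.of_mul_eq_one _ (by rw [← Matrix.det_mul, hswap, Matrix.det_one])
  · rw [Matrix.det_fromBlocks_zero₂₁]
    simp only [Matrix.det_mul, Matrix.det_transpose, hK]
    exact ((hu.pow r).mul (hu.pow r)).mul ((hu.pow r).mul (hu.pow r))


section CodePart
variable {F : Type*} [Field F] {k n : ℕ}

lemma permMat_mulVec (σ : Equiv.Perm (Fin n)) (x : Fin n → F) :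
    (permMat F σ) *ᵥ x = fun i => x (σ.symm i) := by
  funext i
  simp only [mulVec, dotProduct, permMat, of_apply, ite_mul, one_mul, zero_mul]
  rw [Finset.sum_congr rfl (fun j _ => by
    rw [show (if σ j = i then x j else 0) = (if j = σ.symm i then x j else 0) by
      congr 1; simp [Equiv.eq_symm_apply, eq_comm]])]
  simp

lemma mem_dualCode_iff (G : Matrix (Fin k) (Fin n) F) (y : Fin n → F) :
    y ∈ dualCode (Submodule.span F (Set.range fun s => G s)) ↔ G *ᵥ y = 0 := by
  constructor
  · intro hy
    funext s
    have := hy (G s) (Submodule.subset_span ⟨s, rfl⟩)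
    simp only [mulVec, dotProduct, Pi.zero_apply]
    rw [← this]
    exact Finset.sum_congr rfl fun i _ => mul_comm _ _
  · intro hy c hc
    induction hc using Submodule.span_induction with
    | mem c hci =>
      obtain ⟨s, rfl⟩ := hci
      have := congrFun hy s
      simp only [mulVec, dotProduct, Pi.zero_apply] at this
      rw [← this]
      exact Finset.sum_congr rfl fun i _ => mul_comm _ _
    | zero => simp
    | add c d _ _ hc hd => simp [mul_add, Finset.sum_add_distrib, hc, hd]
    | smul t c _ hc =>
      simp only [Pi.smul_apply, smul_eq_mul, mul_left_comm]
      rw [← Finset.mul_sum, hc, mul_zero]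

lemma lced_code_of_matrix (G : Matrix (Fin k) (Fin n) F) (h : IsLCEDMatrix G) :
    IsLCEDCode (Submodule.span F (Set.range fun s => G s)) := by
  obtain ⟨σ, hM⟩ := h
  set P : Matrix (Fin n) (Fin n) F := permMat F σ with hP
  set M : Matrix (Fin k) (Fin k) F := G * P * Gᵀ with hMdef
  have hdet : IsUnit M.det := (Matrix.isUnit_iff_isUnit_det M).mp hM
  have hMinv : M⁻¹ * M = 1 := Matrix.nonsing_inv_mul M hdet
  have hMinv' : M * M⁻¹ = 1 := Matrix.mul_nonsing_inv M hdet
  set C : Submodule F (Fin n → F) := Submodule.span F (Set.range fun s => G s) with hC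
  have hCrange : C = LinearMap.range (Gᵀ.mulVecLin) := by
    rw [Matrix.range_mulVecLin]
    rfl
  refine ⟨LinearMap.ker ((G * P).mulVecLin), ⟨σ.symm, fun x => ?_⟩, ?_, ?_⟩
  · rw [LinearMap.mem_ker, Matrix.mulVecLin_apply, mem_dualCode_iff G,
      ← Matrix.mulVec_mulVec, permMat_mulVec]
  · -- disjoint
    rw [disjoint_iff]
    ext x
    simp only [Submodule.mem_bot, Submodule.mem_inf]
    constructor
    · rintro ⟨hxC, hxD⟩
      rw [hCrange] at hxC
      obtain ⟨v, rfl⟩ := hxC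
      rw [LinearMap.mem_ker] at hxD
      simp only [Matrix.mulVecLin_apply] at hxD ⊢
      rw [Matrix.mulVec_mulVec] at hxD
      have hv : v = 0 := by
        have : M⁻¹ *ᵥ (M *ᵥ v) = v := by
          rw [Matrix.mulVec_mulVec, hMinv, Matrix.one_mulVec]
        rw [← this, hMdef, ← Matrix.mulVec_mulVec] at *
        rw [hxD, Matrix.mulVec_zero]
      rw [hv, Matrix.mulVec_zero]
    · rintro rfl
      exact ⟨Submodule.zero_mem _, Submodule.zero_mem _⟩
  · -- codisjoint
    rw [codisjoint_iff, eq_top_iff]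
    intro x _
    set u : Fin k → F := M⁻¹ *ᵥ ((G * P) *ᵥ x) with hu
    set c : Fin n → F := Gᵀ *ᵥ u with hc
    have hcC : c ∈ C := by
      rw [hCrange]; exact ⟨u, rfl⟩
    have hdD : x - c ∈ LinearMap.ker ((G * P).mulVecLin) := by
      rw [LinearMap.mem_ker, Matrix.mulVecLin_apply, Matrix.mulVec_sub, hc, hu,
        Matrix.mulVec_mulVec, Matrix.mulVec_mulVec, ← hMdef, hMinv',
        Matrix.one_mulVec, sub_self]
    exact Submodule.mem_sup.mpr ⟨c, hcC, x - c, hdD, by ring⟩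

end CodePart

end LCEDProofAux


/-- over a field of characteristic 2, if the degree-`r` monic polynomial `g`
(with nonzero constant term) satisfies `g·g* = g₀ + g(1)²·x^r + g₀·x^{2r}`, then the
`2r × 3r` generator matrix `G` of the corresponding cyclic code of length `n = 3r` is an
LCED matrix; consequently the cyclic code generated by `g` (the row space of `G`) is an
LCED code. -/
theorem stmt1 {F : Type*} [Field F] [CharP F 2] {r : ℕ} (g : Polynomial F)
    (hg : g.Monic) (hdeg : g.natDegree = r) (h0 : g.coeff 0 ≠ 0)
    (hcond : g * g.reverse =
      Polynomial.C (g.coeff 0) + Polynomial.C (g.eval 1 ^ 2) * Polynomial.X ^ r +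
        Polynomial.C (g.coeff 0) * Polynomial.X ^ (2 * r)) :
    IsLCEDMatrix (shiftMat g r) ∧
    IsLCEDCode (Submodule.span F (Set.range fun s => shiftMat g r s)) := by
  have hm := lced_matrix g hg hdeg h0 hcond
  exact ⟨hm, lced_code_of_matrix _ hm⟩
end

section
/- Let F be a field, A a k×(n−k) matrix over F, P a k×k permutation matrix, and P' an (n−k)×(n−k) permutation matrix. The following are equivalent: (i) the block matrix (I_k | A) is an LCED matrix; (ii) (I_k | P·A) is an LCED matrix; (iii) (I_k | A·P') is an LCED matrix. -/
open Matrix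

section aux

variable {F : Type*} [Field F] {n : Type*} [Fintype n] [DecidableEq n]

lemma permMat_mul (σ τ : Equiv.Perm n) :
    (permMat F σ) * (permMat F τ) = permMat F (σ * τ) := by
  ext i j
  simp only [permMat, mul_apply, of_apply]
  rw [Finset.sum_eq_single (τ j)]
  · simp [Equiv.Perm.mul_apply]
    congr
  · intro b _ hb
    simp [Ne.symm hb]
  · simp

lemma permMat_one : permMat F (1 : Equiv.Perm n) = 1 := by
  ext i j
  simp [permMat, Matrix.one_apply, eq_comm]

lemma permMat_transpose (σ : Equiv.Perm n) :
    (permMat F σ)ᵀ = permMat F σ⁻¹ := by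
  ext i j
  simp only [permMat, transpose_apply, of_apply]
  congr 1
  rw [eq_iff_iff]
  constructor <;> rintro rfl <;> simp

lemma isUnit_permMat (σ : Equiv.Perm n) : IsUnit (permMat F σ) := by
  refine isUnit_iff_exists.mpr ⟨permMat F σ⁻¹, ?_, ?_⟩ <;>
    rw [permMat_mul] <;> simp [permMat_one]

variable {k : Type*} [Fintype k] [DecidableEq k]

lemma lced_unit_mul (Q : Matrix k k F) (hQ : IsUnit Q) (G : Matrix k n F) :
    IsLCEDMatrix (Q * G) ↔ IsLCEDMatrix G := by
  have hdet : IsUnit Q.det := (Matrix.isUnit_iff_isUnit_det Q).mp hQ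
  apply exists_congr
  intro σ
  have heq : Q * G * permMat F σ * (Q * G)ᵀ = Q * (G * permMat F σ * Gᵀ) * Qᵀ := by
    rw [transpose_mul]
    simp [Matrix.mul_assoc]
  rw [heq, Matrix.isUnit_iff_isUnit_det, Matrix.isUnit_iff_isUnit_det (G * permMat F σ * Gᵀ)]
  have h0 : Q.det ≠ 0 := hdet.ne_zero
  simp only [det_mul, det_transpose, IsUnit.mul_iff]
  simp only [isUnit_iff_ne_zero]
  tauto

lemma lced_mul_perm (τ : Equiv.Perm n) (G : Matrix k n F) :
    IsLCEDMatrix (G * permMat F τ) ↔ IsLCEDMatrix G := by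
  have key : ∀ σ : Equiv.Perm n,
      G * permMat F τ * permMat F σ * (G * permMat F τ)ᵀ
        = G * permMat F (τ * σ * τ⁻¹) * Gᵀ := by
    intro σ
    rw [transpose_mul, permMat_transpose]
    simp only [Matrix.mul_assoc]
    rw [← Matrix.mul_assoc (permMat F σ), permMat_mul, ← Matrix.mul_assoc (permMat F τ),
      permMat_mul, mul_assoc]
  constructor
  · rintro ⟨σ, h⟩
    exact ⟨τ * σ * τ⁻¹, by rwa [key] at h⟩
  · rintro ⟨σ, h⟩
    refine ⟨τ⁻¹ * σ * τ, ?_⟩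
    rw [key]
    have : τ * (τ⁻¹ * σ * τ) * τ⁻¹ = σ := by group
    rwa [this]

variable {m : Type*} [Fintype m] [DecidableEq m]

lemma permMat_sumCongr (σ : Equiv.Perm k) (τ : Equiv.Perm m) :
    permMat F (Equiv.sumCongr σ τ) =
      fromBlocks (permMat F σ) 0 0 (permMat F τ) := by
  ext i j
  cases i <;> cases j <;> simp [permMat, fromBlocks]

end aux

/-- `(I_k | A)` is LCED iff `(I_k | P·A)` is LCED iff `(I_k | A·P')` is LCED,
for permutation matrices `P` (of size `k`) and `P'` (of size `n - k`). -/
theorem stmt3 {F : Type*} [Field F] {k m : ℕ} (A : Matrix (Fin k) (Fin m) F)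
    (P : Equiv.Perm (Fin k)) (P' : Equiv.Perm (Fin m)) :
    (IsLCEDMatrix (fromCols (1 : Matrix (Fin k) (Fin k) F) A) ↔
      IsLCEDMatrix (fromCols (1 : Matrix (Fin k) (Fin k) F) (permMat F P * A))) ∧
    (IsLCEDMatrix (fromCols (1 : Matrix (Fin k) (Fin k) F) A) ↔
      IsLCEDMatrix (fromCols (1 : Matrix (Fin k) (Fin k) F) (A * permMat F P'))) := by
  constructor
  · have heq : fromCols (1 : Matrix (Fin k) (Fin k) F) (permMat F P * A)
        = permMat F P * fromCols (1 : Matrix (Fin k) (Fin k) F) A * permMat F (Equiv.sumCongr P⁻¹ 1 : Equiv.Perm (Fin k ⊕ Fin m)) := by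
      rw [permMat_sumCongr, mul_fromCols, fromCols_mul_fromBlocks]
      simp [permMat_mul, permMat_one]
    rw [heq, Matrix.mul_assoc, lced_unit_mul _ (isUnit_permMat P), lced_mul_perm]
  · have heq : fromCols (1 : Matrix (Fin k) (Fin k) F) (A * permMat F P')
        = fromCols (1 : Matrix (Fin k) (Fin k) F) A * permMat F (Equiv.sumCongr 1 P' : Equiv.Perm (Fin k ⊕ Fin m)) := by
      rw [permMat_sumCongr, fromCols_mul_fromBlocks]
      simp [permMat_one]
    rw [heq, lced_mul_perm]
end

section
/- Let F be a field and C a linear code of length n over F. If C is an LCED code, then the dual code C⊥ is also an LCED code. -/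
open Matrix

section Aux

variable {F : Type*} [Field F] {n : ℕ}

/-- The standard dot-product bilinear form on `Fin n → F`. -/
noncomputable def stdBilin (F : Type*) [Field F] (n : ℕ) :
    LinearMap.BilinForm F (Fin n → F) :=
  LinearMap.mk₂ F (fun x y => ∑ i, x i * y i)
    (by intro a b c; simp [add_mul, Finset.sum_add_distrib])
    (by intro t a c; simp [Finset.mul_sum, mul_assoc])
    (by intro a b c; simp [mul_add, Finset.sum_add_distrib])
    (by intro t a c; simp [Finset.mul_sum, mul_left_comm])

lemma stdBilin_apply (x y : Fin n → F) : stdBilin F n x y = ∑ i, x i * y i := rfl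

lemma stdBilin_symm : (stdBilin F n).IsSymm := by
  constructor
  intro x y
  simp [stdBilin_apply, mul_comm]

lemma stdBilin_refl : (stdBilin F n).IsRefl := stdBilin_symm.isRefl

lemma stdBilin_nondeg : (stdBilin F n).Nondegenerate := by
  refine ⟨?_, ?_⟩ <;> intro x hx <;> funext i <;> have := hx (Pi.single i 1) <;>
    rw [stdBilin_apply] at this <;> simpa [Pi.single_apply, mul_ite, ite_mul] using this

lemma dualCode_eq_orthogonal (C : Submodule F (Fin n → F)) :
    dualCode C = (stdBilin F n).orthogonal C := by
  ext x
  constructor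
  · intro hx c hc
    exact stdBilin_refl _ _ (hx c hc)
  · intro hx c hc
    exact stdBilin_refl _ _ (hx c hc)

/-- The linear map given by permuting coordinates. -/
def permLin (F : Type*) [Field F] {n : ℕ} (σ : Equiv.Perm (Fin n)) :
    (Fin n → F) →ₗ[F] (Fin n → F) where
  toFun x := fun j => x (σ j)
  map_add' _ _ := rfl
  map_smul' _ _ := rfl

lemma permLin_surjective (σ : Equiv.Perm (Fin n)) :
    Function.Surjective (permLin F σ) := fun y =>
  ⟨fun j => y (σ.symm j), by funext j; simp [permLin]⟩

lemma stdBilin_permLin (σ : Equiv.Perm (Fin n)) (x y : Fin n → F) :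
    stdBilin F n (permLin F σ x) (permLin F σ y) = stdBilin F n x y := by
  simp only [stdBilin_apply, permLin, LinearMap.coe_mk, AddHom.coe_mk]
  exact Equiv.sum_comp σ (fun i => x i * y i)

lemma orthogonal_comap_permLin (σ : Equiv.Perm (Fin n)) (S : Submodule F (Fin n → F)) :
    (stdBilin F n).orthogonal (S.comap (permLin F σ)) =
      ((stdBilin F n).orthogonal S).comap (permLin F σ) := by
  ext x
  constructor
  · intro hx s hs
    have heq : permLin F σ (permLin F σ.symm s) = s := by
      funext j; simp [permLin]
    have hmem : permLin F σ.symm s ∈ Submodule.comap (permLin F σ) S := by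
      simpa [Submodule.mem_comap, heq] using hs
    have h0 : stdBilin F n (permLin F σ.symm s) x = 0 := hx _ hmem
    show stdBilin F n s (permLin F σ x) = 0
    rw [← heq, stdBilin_permLin]
    exact h0
  · intro hx y hy
    have h0 : stdBilin F n (permLin F σ y) (permLin F σ x) = 0 := hx _ hy
    show stdBilin F n y x = 0
    rwa [stdBilin_permLin] at h0

lemma orthogonal_sup (S T : Submodule F (Fin n → F)) :
    (stdBilin F n).orthogonal (S ⊔ T) =
      (stdBilin F n).orthogonal S ⊓ (stdBilin F n).orthogonal T := by
  apply le_antisymm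
  · exact le_inf ((stdBilin F n).orthogonal_le le_sup_left)
      ((stdBilin F n).orthogonal_le le_sup_right)
  · rintro x ⟨hxS, hxT⟩ m hm
    obtain ⟨s, hs, t, ht, rfl⟩ := Submodule.mem_sup.mp hm
    have h1 : stdBilin F n s x = 0 := hxS s hs
    have h2 : stdBilin F n t x = 0 := hxT t ht
    simp [LinearMap.BilinForm.IsOrtho, h1, h2]

end Aux

/-- if `C` is an LCED code then so is its dual `C⊥`. -/
theorem stmt4 {F : Type*} [Field F] {n : ℕ} (C : Submodule F (Fin n → F))
    (h : IsLCEDCode C) : IsLCEDCode (dualCode C) := by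
  obtain ⟨D, ⟨σ, hσ⟩, hcompl⟩ := h
  have hD : D = (dualCode C).comap (permLin F σ) := by
    ext x; exact hσ x
  refine ⟨C.comap (permLin F σ), ⟨σ, ?_⟩, ?_⟩
  · intro x
    have : dualCode (dualCode C) = C := by
      rw [dualCode_eq_orthogonal, dualCode_eq_orthogonal,
        (stdBilin F n).orthogonal_orthogonal stdBilin_nondeg stdBilin_refl]
    rw [this]
    rfl
  · have horth : ∀ S T : Submodule F (Fin n → F), IsCompl S T →
        IsCompl ((stdBilin F n).orthogonal S) ((stdBilin F n).orthogonal T) := by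
      intro S T hST
      have hsup : S ⊔ T = ⊤ := codisjoint_iff.mp hST.codisjoint
      have hinf : S ⊓ T = ⊥ := disjoint_iff.mp hST.disjoint
      constructor
      · rw [disjoint_iff, ← orthogonal_sup, hsup,
          LinearMap.BilinForm.orthogonal_top_eq_bot stdBilin_nondeg]
      · rw [codisjoint_iff]
        have hinj : Function.Injective ((stdBilin F n).orthogonal) := by
          intro U V hUV
          have := congrArg ((stdBilin F n).orthogonal) hUV
          rwa [(stdBilin F n).orthogonal_orthogonal stdBilin_nondeg stdBilin_refl,
            (stdBilin F n).orthogonal_orthogonal stdBilin_nondeg stdBilin_refl] at this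
        apply hinj
        rw [orthogonal_sup,
          (stdBilin F n).orthogonal_orthogonal stdBilin_nondeg stdBilin_refl,
          (stdBilin F n).orthogonal_orthogonal stdBilin_nondeg stdBilin_refl, hinf,
          LinearMap.BilinForm.orthogonal_top_eq_bot stdBilin_nondeg]
    have hC : (stdBilin F n).orthogonal (dualCode C) = C := by
      rw [dualCode_eq_orthogonal]
      exact (stdBilin F n).orthogonal_orthogonal stdBilin_nondeg stdBilin_refl C
    have key := horth C D hcompl
    rw [hD, orthogonal_comap_permLin, ← dualCode_eq_orthogonal, hC] at key
    exact key
end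

section
/- Let F be a field, n = k+1, and let G = (I_k | a) be the k×(k+1) matrix whose last column is a = (a_1,…,a_k)ᵀ ∈ F^k. Let π be a permutation of {1,…,k+1} with π(k+1) ≠ k+1, let P_π be its permutation matrix, and set i = π(k+1) and j = π⁻¹(k+1). Then det(G·P_π·Gᵀ) = ε·( a_j + a_i − Σ_{r=1, r≠j}^{k} a_{π(r)}·a_r ) for some ε ∈ {1, −1}. -/
open Matrix

/-- The `k × (k+1)` matrix `(I_k | a)` whose first `k` columns form the identity matrix
and whose last column is the vector `a`. -/
def stdMat {F : Type*} [Zero F] [One F] {k : ℕ} (a : Fin k → F) :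
    Matrix (Fin k) (Fin (k + 1)) F :=
  Matrix.of fun s j => if (j : ℕ) = (s : ℕ) then 1 else if (j : ℕ) = k then a s else 0

theorem Equiv.Perm.apply_inv_self {α : Type*} (f : Equiv.Perm α) (x : α) : f (f⁻¹ x) = x :=
  f.apply_symm_apply x

theorem Equiv.Perm.inv_apply_self {α : Type*} (f : Equiv.Perm α) (x : α) : f⁻¹ (f x) = x :=
  f.symm_apply_apply x

namespace Stmt7Aux

variable {k : ℕ}

def tau (π : Equiv.Perm (Fin (k+1))) (hπ : π (Fin.last k) ≠ Fin.last k) : Equiv.Perm (Fin k) where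
  toFun s :=
    if h : π s.castSucc = Fin.last k then (π (Fin.last k)).castPred hπ
    else (π s.castSucc).castPred h
  invFun s :=
    if h : π⁻¹ s.castSucc = Fin.last k then
      (π⁻¹ (Fin.last k)).castPred
        (fun hc => hπ (((π.apply_inv_self (Fin.last k)).symm.trans (congrArg π hc)).symm))
    else (π⁻¹ s.castSucc).castPred h
  left_inv s := by
    by_cases h : π s.castSucc = Fin.last k
    · simp only [h, dif_pos]
      rw [dif_pos (by simp [Fin.castSucc_castPred])]
      have : π⁻¹ (Fin.last k) = s.castSucc := by rw [← h, Equiv.Perm.inv_apply_self]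
      exact Fin.castSucc_injective k (by simp [Fin.castSucc_castPred, this])
    · simp only [h, dif_neg]
      rw [dif_neg (by simp [Fin.castSucc_castPred, (Fin.castSucc_lt_last s).ne])]
      simp [Fin.castSucc_castPred]
  right_inv s := by
    by_cases h : π⁻¹ s.castSucc = Fin.last k
    · simp only [h, dif_pos]
      rw [dif_pos (by simp [Fin.castSucc_castPred])]
      have : π (Fin.last k) = s.castSucc := by rw [← h, Equiv.Perm.apply_inv_self]
      exact Fin.castSucc_injective k (by simp [Fin.castSucc_castPred, this])
    · simp only [h, dif_neg]
      rw [dif_neg (by simp [Fin.castSucc_castPred, (Fin.castSucc_lt_last s).ne])]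
      simp [Fin.castSucc_castPred]

theorem tau_eq (π : Equiv.Perm (Fin (k+1))) (hπ : π (Fin.last k) ≠ Fin.last k)
    {s : Fin k} (h : π s.castSucc ≠ Fin.last k) :
    (tau π hπ s).castSucc = π s.castSucc := by
  simp [tau, h, Fin.castSucc_castPred, Equiv.coe_fn_mk]

theorem tau_eq' (π : Equiv.Perm (Fin (k+1))) (hπ : π (Fin.last k) ≠ Fin.last k)
    {s : Fin k} (h : π s.castSucc = Fin.last k) :
    (tau π hπ s).castSucc = π (Fin.last k) := by
  simp [tau, h, Fin.castSucc_castPred, Equiv.coe_fn_mk]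

end Stmt7Aux


/-- for `G = (I_k | a)` and a permutation `π` of `{1, …, k+1}` with
`π(k+1) = i ≠ k+1` and `j = π⁻¹(k+1)`, we have
`det(G·P_π·Gᵀ) = ±(a_j + a_i − Σ_{r ≠ j, r ≤ k} a_{π(r)}·a_r)`. -/
theorem stmt7 {F : Type*} [Field F] {k : ℕ} (a : Fin k → F)
    (π : Equiv.Perm (Fin (k + 1))) (hπ : π (Fin.last k) ≠ Fin.last k) :
    ∃ ε : F, (ε = 1 ∨ ε = -1) ∧
      (stdMat a * permMat F π * (stdMat a)ᵀ).det =
        ε * ((Fin.snoc a 0 : Fin (k + 1) → F) (π⁻¹ (Fin.last k)) +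
          (Fin.snoc a 0 : Fin (k + 1) → F) (π (Fin.last k)) -
          ∑ r ∈ Finset.univ.filter (fun r : Fin k => r.castSucc ≠ π⁻¹ (Fin.last k)),
            (Fin.snoc a 0 : Fin (k + 1) → F) (π r.castSucc) * a r) := by
  classical
  set L := Fin.last k with hL
  have hπ' : π⁻¹ L ≠ L := fun h => hπ (((π.apply_inv_self L).symm.trans (congrArg π h)).symm)
  set τ := Stmt7Aux.tau π hπ with hτdef
  set j' : Fin k := (π⁻¹ L).castPred hπ' with hj'
  set i' : Fin k := (π L).castPred hπ with hi'
  have hjc : j'.castSucc = π⁻¹ L := Fin.castSucc_castPred _ _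
  have hic : i'.castSucc = π L := Fin.castSucc_castPred _ _
  have hπj : π j'.castSucc = L := by rw [hjc, Equiv.Perm.apply_inv_self]
  have hτj : τ j' = i' := by
    have h1 := Stmt7Aux.tau_eq' π hπ hπj
    exact Fin.castSucc_injective k (h1.trans hic.symm)
  have hτ_ne : ∀ s : Fin k, s ≠ j' → (τ s).castSucc = π s.castSucc := by
    intro s hs
    refine Stmt7Aux.tau_eq π hπ ?_
    intro hc
    exact hs (Fin.castSucc_injective k (by rw [hjc, hL, ← hc, Equiv.Perm.inv_apply_self]))
  set U : Matrix (Fin k) (Fin 2) F := Matrix.of (fun s t =>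
    if t = 0 then a (τ s) - (if s = j' then 1 else 0) else (if s = j' then (1:F) else 0)) with hU
  set W : Matrix (Fin 2) (Fin k) F := Matrix.of (fun t r =>
    if t = 0 then (if r = j' then (1:F) else 0) else a r) with hW
  -- basic entry facts about stdMat
  have hstd_cs : ∀ (t v : Fin k), stdMat a t v.castSucc = if v = t then (1:F) else 0 := by
    intro t v
    simp [stdMat, Fin.val_eq_val, v.isLt.ne]
  have hstd_last : ∀ t : Fin k, stdMat a t L = a t := by
    intro t
    simp [stdMat, hL, t.isLt.ne']
  -- the key factorization
  have key : stdMat a * permMat F π * (stdMat a)ᵀ = (τ.permMatrix F)ᵀ * (1 + U * W) := by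
    ext s t
    have h1 : ∀ v, (stdMat a * permMat F π) s v = stdMat a s (π v) := by
      intro v
      simp [mul_apply, permMat, mul_ite, mul_one, mul_zero, Finset.sum_ite_eq]
    have lhs_eq : (stdMat a * permMat F π * (stdMat a)ᵀ) s t
        = stdMat a s (π t.castSucc) + stdMat a s (π L) * a t := by
      rw [mul_apply]
      simp only [transpose_apply, h1]
      rw [Fin.sum_univ_castSucc]
      congr 1
      · simp [hstd_cs, mul_ite, mul_one, mul_zero, Finset.sum_ite_eq']
      · rw [hstd_last]
    have rhs_eq : ((τ.permMatrix F)ᵀ * ((1 : Matrix (Fin k) (Fin k) F) + U * W)) s t = ((1 : Matrix (Fin k) (Fin k) F) + U * W) (τ⁻¹ s) t := by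
      rw [mul_apply]
      have hpm : ∀ r, ((τ.permMatrix F)ᵀ) s r = if r = τ⁻¹ s then (1:F) else 0 := by
        intro r
        by_cases h : r = τ⁻¹ s
        · subst h
          simp [Equiv.Perm.permMatrix, PEquiv.toMatrix_apply, Equiv.toPEquiv_apply]
        · have h2 : ¬ τ r = s := fun hc => h (by rw [← hc, Equiv.Perm.inv_apply_self])
          simp [Equiv.Perm.permMatrix, PEquiv.toMatrix_apply, Equiv.toPEquiv_apply, h, h2]
          exact h
      have h2 : ∀ r : Fin k, ((τ.permMatrix F)ᵀ) s r * ((1 : Matrix (Fin k) (Fin k) F) + U * W) r t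
          = if r = τ⁻¹ s then ((1 : Matrix (Fin k) (Fin k) F) + U * W) r t else 0 := by
        intro r
        rw [hpm, ite_mul, one_mul, zero_mul]
      rw [Finset.sum_congr rfl fun r _ => h2 r, Finset.sum_ite_eq']
      simp
    have expand : ((1 : Matrix (Fin k) (Fin k) F) + U * W) (τ⁻¹ s) t
        = (if τ⁻¹ s = t then (1:F) else 0)
          + ((a (τ (τ⁻¹ s)) - (if τ⁻¹ s = j' then 1 else 0)) * (if t = j' then (1:F) else 0)
            + (if τ⁻¹ s = j' then (1:F) else 0) * a t) := by
      simp [Matrix.add_apply, one_apply, mul_apply, hU, hW, Fin.sum_univ_two]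
    have hstdπL : stdMat a s (π L) = if τ⁻¹ s = j' then (1:F) else 0 := by
      rw [← hic, hstd_cs]
      congr 1
      simp only [eq_iff_iff]
      constructor
      · rintro rfl; rw [← hτj, Equiv.Perm.inv_apply_self]
      · intro h; rw [← hτj, ← h, Equiv.Perm.apply_inv_self]
    rw [lhs_eq, rhs_eq, expand, Equiv.Perm.apply_inv_self, hstdπL]
    by_cases ht : t = j'
    · subst ht
      rw [hπj, hstd_last]
      by_cases hs : τ⁻¹ s = j' <;> simp [hs] <;> ring
    · have : stdMat a s (π t.castSucc) = if τ⁻¹ s = t then (1:F) else 0 := by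
        rw [← hτ_ne t ht, hstd_cs]
        congr 1
        simp only [eq_iff_iff]
        exact ⟨fun h => by rw [← h, Equiv.Perm.inv_apply_self],
               fun h => by rw [← h, Equiv.Perm.apply_inv_self]⟩
      rw [this]
      simp [ht]
  -- determinant computation
  refine ⟨((Equiv.Perm.sign τ : ℤ) : F), ?_, ?_⟩
  · rcases Int.units_eq_one_or (Equiv.Perm.sign τ) with h | h <;> rw [h] <;> simp
  rw [key, det_mul, det_transpose, det_permutation, Matrix.det_one_add_mul_comm]
  have hone : ((1:Fin 2) = 0) = False := by decide
  have e00 : ((1 : Matrix (Fin 2) (Fin 2) F) + W * U) 0 0 = a i' := by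
    rw [Matrix.add_apply, one_apply_eq, mul_apply]
    rw [Finset.sum_eq_single j' (fun r _ hr => by simp [hW, hU, hr]) (by simp)]
    have hterm : W 0 j' * U j' 0 = a (τ j') - 1 := by simp [hW, hU]
    rw [hterm, hτj]; ring
  have e01 : ((1 : Matrix (Fin 2) (Fin 2) F) + W * U) 0 1 = 1 := by
    rw [Matrix.add_apply, one_apply_ne (by decide), mul_apply]
    rw [Finset.sum_eq_single j' (fun r _ hr => by simp [hW, hU, hr, hone]) (by simp)]
    simp [hW, hU, hone]
  have e10 : ((1 : Matrix (Fin 2) (Fin 2) F) + W * U) 1 0 = (∑ r, a r * a (τ r)) - a j' := by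
    rw [Matrix.add_apply, one_apply_ne (by decide), mul_apply]
    have hterm : ∀ r : Fin k, W 1 r * U r 0 = a r * a (τ r) - (if r = j' then a r else 0) := by
      intro r
      by_cases hr : r = j' <;> simp [hW, hU, hr, hone] <;> ring
    rw [Finset.sum_congr rfl fun r _ => hterm r, Finset.sum_sub_distrib, Finset.sum_ite_eq']
    simp
  have e11 : ((1 : Matrix (Fin 2) (Fin 2) F) + W * U) 1 1 = 1 + a j' := by
    rw [Matrix.add_apply, one_apply_eq, mul_apply]
    rw [Finset.sum_eq_single j' (fun r _ hr => by simp [hW, hU, hr, hone]) (by simp)]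
    simp [hW, hU, hone]
  rw [det_fin_two, e00, e01, e10, e11]
  -- rewrite snocs and the sum
  have hsnoc1 : (Fin.snoc a 0 : Fin (k + 1) → F) (π⁻¹ L) = a j' := by
    rw [← hjc, Fin.snoc_castSucc]
  have hsnoc2 : (Fin.snoc a 0 : Fin (k + 1) → F) (π L) = a i' := by
    rw [← hic, Fin.snoc_castSucc]
  have hfilter : Finset.univ.filter (fun r : Fin k => r.castSucc ≠ π⁻¹ L)
      = Finset.univ.erase j' := by
    ext r
    simp [← hjc, Fin.castSucc_inj, Finset.mem_erase, and_comm]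
  have hsum : ∑ r ∈ Finset.univ.filter (fun r : Fin k => r.castSucc ≠ π⁻¹ L),
      (Fin.snoc a 0 : Fin (k + 1) → F) (π r.castSucc) * a r
      = ∑ r ∈ Finset.univ.erase j', a r * a (τ r) := by
    rw [hfilter]
    refine Finset.sum_congr rfl fun r hr => ?_
    have hr' : r ≠ j' := (Finset.mem_erase.mp hr).1
    rw [← hτ_ne r hr', Fin.snoc_castSucc, mul_comm]
  rw [hsnoc1, hsnoc2, hsum]
  have hsplit : (∑ r, a r * a (τ r))
      = a j' * a (τ j') + ∑ r ∈ Finset.univ.erase j', a r * a (τ r) :=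
    (Finset.add_sum_erase Finset.univ (fun r => a r * a (τ r)) (Finset.mem_univ j')).symm
  rw [hsplit, hτj]
  ring
end

section
/- Let F be a field and G = (1 | a_1, …, a_{n−1}) a 1×n matrix over F whose first entry is 1. Then G is not an LCED matrix if and only if (n : F) = 0 (i.e., the characteristic of F divides n) and a_i = 1 for all i = 1,…,n−1. -/
open Matrix

lemma entry_eq {F : Type*} [Field F] {n : ℕ} (v : Fin n → F) (σ : Equiv.Perm (Fin n)) :
    ((Matrix.of fun (_ : Fin 1) j => v j) * permMat F σ *
      (Matrix.of fun (_ : Fin 1) j => v j)ᵀ) 0 0 = ∑ j, v (σ j) * v j := by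
  simp [Matrix.mul_apply, permMat, Finset.mul_sum, mul_ite, mul_comm]

/-- the `1 × n` matrix `G = (1 | a₁, …, a_{n-1})` is not an LCED matrix iff
the characteristic of `F` divides `n` and every `a_i = 1`. -/
theorem stmt9 {F : Type*} [Field F] {m : ℕ} (a : Fin m → F) :
    ¬ IsLCEDMatrix (Matrix.of fun (_ : Fin 1) (j : Fin (m + 1)) =>
        (Fin.cons 1 a : Fin (m + 1) → F) j) ↔
      ((m + 1 : ℕ) : F) = 0 ∧ ∀ i, a i = 1 := by
  set v : Fin (m+1) → F := Fin.cons 1 a with hv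
  have key : ¬ IsLCEDMatrix (Matrix.of fun (_ : Fin 1) (j : Fin (m + 1)) => v j) ↔
      ∀ σ : Equiv.Perm (Fin (m+1)), ∑ j, v (σ j) * v j = 0 := by
    rw [IsLCEDMatrix, not_exists]
    refine forall_congr' fun σ => ?_
    rw [Matrix.isUnit_iff_isUnit_det, Matrix.det_fin_one, isUnit_iff_ne_zero, not_ne_iff,
      entry_eq]
  rw [key]
  constructor
  · intro h
    have h1 : ∀ i : Fin m, a i = 1 := by
      intro i
      have hs := h (Equiv.swap 0 i.succ)
      have hid := h (Equiv.refl _)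
      have hdiff : ∑ j, (v j * v j - v (Equiv.swap 0 i.succ j) * v j) = 0 := by
        rw [Finset.sum_sub_distrib]
        simpa using sub_eq_zero_of_eq (by rw [hs]; simpa using hid)
      have hsub : ∑ j ∈ ({0, i.succ} : Finset (Fin (m+1))),
          (v j * v j - v (Equiv.swap 0 i.succ j) * v j) = 0 := by
        rw [Finset.sum_subset (Finset.subset_univ _), hdiff]
        intro x _ hx
        simp only [Finset.mem_insert, Finset.mem_singleton, not_or] at hx
        rw [Equiv.swap_apply_of_ne_of_ne hx.1 hx.2, sub_self]
      rw [Finset.sum_pair (Fin.succ_ne_zero i).symm] at hsub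
      simp only [Equiv.swap_apply_left, Equiv.swap_apply_right] at hsub
      have hv0 : v 0 = 1 := rfl
      have hvi : v i.succ = a i := by simp [hv]
      rw [hv0, hvi] at hsub
      have : (1 - a i) ^ 2 = 0 := by ring_nf; ring_nf at hsub; linear_combination hsub
      have := pow_eq_zero_iff (n := 2) (by norm_num) |>.mp this
      linear_combination -this
    refine ⟨?_, h1⟩
    have hid := h (Equiv.refl _)
    have hv1 : ∀ j, v j = 1 := by
      intro j
      refine Fin.cases ?_ ?_ j <;> simp [hv, h1]
    simp only [Equiv.refl_apply, hv1, mul_one] at hid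
    simpa using hid
  · intro ⟨hc, h1⟩ σ
    have hv1 : ∀ j, v j = 1 := by
      intro j
      refine Fin.cases ?_ ?_ j <;> simp [hv, h1]
    simp [hv1, hc]
end

section
/- Let F be a field of characteristic 2 and let M be a 3×3 symmetric matrix over F such that det(I_3 + P·M) = 0 for every 3×3 permutation matrix P (i.e., −1 is an eigenvalue of P·M for every permutation matrix P). Then the trace of M equals 1. -/
open Matrix

set_option maxRecDepth 40000 in
/-- over a field of characteristic 2, a symmetric `3 × 3` matrix `M` such
that `-1` is an eigenvalue of `P·M` for every permutation matrix `P` has trace `1`. -/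
theorem stmt13 {F : Type*} [Field F] [CharP F 2] (M : Matrix (Fin 3) (Fin 3) F)
    (hM : M.IsSymm)
    (h : ∀ σ : Equiv.Perm (Fin 3),
      ((1 : Matrix (Fin 3) (Fin 3) F) + permMat F σ * M).det = 0) :
    M.trace = 1 := by
  have h2 : (2 : F) = 0 := by
    have := CharP.cast_eq_zero F 2
    push_cast at this
    exact this
  have s10 : M 1 0 = M 0 1 := by
    have := congrFun (congrFun hM 0) 1
    simpa [Matrix.transpose_apply] using this
  have s20 : M 2 0 = M 0 2 := by
    have := congrFun (congrFun hM 0) 2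
    simpa [Matrix.transpose_apply] using this
  have s21 : M 2 1 = M 1 2 := by
    have := congrFun (congrFun hM 1) 2
    simpa [Matrix.transpose_apply] using this
  have e0 := h (⟨![0,1,2], ![0,1,2], by decide, by decide⟩ : Equiv.Perm (Fin 3))
  have e1 := h (⟨![0,2,1], ![0,2,1], by decide, by decide⟩ : Equiv.Perm (Fin 3))
  have e2 := h (⟨![1,0,2], ![1,0,2], by decide, by decide⟩ : Equiv.Perm (Fin 3))
  have e3 := h (⟨![1,2,0], ![2,0,1], by decide, by decide⟩ : Equiv.Perm (Fin 3))
  simp only [Matrix.det_fin_three, permMat, Matrix.add_apply, Matrix.mul_apply,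
    Matrix.one_apply, Fin.sum_univ_three, Matrix.of_apply, Equiv.coe_fn_mk,
    Matrix.cons_val_zero, Matrix.cons_val_one, Matrix.head_cons,
    Matrix.cons_val_two, Matrix.tail_cons] at e0 e1 e2 e3
  simp only [Fin.reduceEq, reduceIte, add_zero, zero_add] at e0 e1 e2 e3
  rw [s10, s20, s21] at e0 e1 e2 e3
  have key : (M 0 0 + M 1 1 + M 2 2 - 1)^2 = 0 := by
    linear_combination (((1:F)) + ((1:F))*(M 1 2)*(M 1 2) + ((1:F))*(M 0 1)*(M 0 1) + ((1:F))*(M 1 1) + ((1:F))*(M 1 1)*(M 2 2) + ((1:F))*(M 0 0)*(M 1 1)) * e0 + (((1:F))*(M 1 2)*(M 1 2) + ((1:F))*(M 0 1)*(M 0 1) + ((1:F))*(M 2 2) + ((1:F))*(M 1 1)*(M 2 2) + ((1:F))*(M 0 0) + ((1:F))*(M 0 0)*(M 1 1)) * e1 + (((1:F))*(M 1 2) + ((1:F))*(M 0 2) + ((1:F))*(M 0 2)*(M 1 2) + ((1:F))*(M 0 1) + ((1:F))*(M 0 1)*(M 1 2) + ((1:F))*(M 0 1)*(M 0 2) + ((1:F))*(M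 0 1)*(M 0 1) + ((1:F))*(M 2 2) + ((1:F))*(M 2 2)*(M 0 1) + ((1:F))*(M 1 1)*(M 0 2) + ((1:F))*(M 0 0)*(M 1 2) + ((1:F))*(M 0 0)*(M 1 1)) * e2 + (((1:F))*(M 1 2) + ((1:F))*(M 0 2) + ((1:F))*(M 0 2)*(M 1 2) + ((1:F))*(M 0 1) + ((1:F))*(M 0 1)*(M 1 2) + ((1:F))*(M 0 1)*(M 0 2) + ((1:F))*(M 0 1)*(M 0 1) + ((1:F))*(M 2 2) + ((1:F))*(M 2 2)*(M 0 1) + ((1:F))*(M 1 1)*(M 0 2) + ((1:F))*(M 0 0)*(M 1 2) + ((1:F))*(M 0 0)*(M 1 1)) * e3 + (((-1:F))*(M 1 2) + ((-1:F))*(M 1 2)*(M 1 2) + ((-1:F))*(M 1 2)*(M 1 2)*(M 1 2) + ((-1:F))*(M 0 2) + ((-2:F))*(M 0 2)*(M 1 2) + ((1:F))*(M 0 2)*(M 0 2)*(M 1 2)*(M 1 2) + ((-1:F))*(M 0 1) + ((-3:F))*(M 0 1)*(M 1 2) + ((-1:F))*(M 0 1)*(M 1 2)*(M 1 2) + ((-3:F))*(M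 0 1)*(M 0 2) + ((-4:F))*(M 0 1)*(M 0 2)*(M 1 2) + ((1:F))*(M 0 1)*(M 0 2)*(M 1 2)*(M 1 2) + ((-1:F))*(M 0 1)*(M 0 2)*(M 0 2) + ((-3:F))*(M 0 1)*(M 0 1) + ((-4:F))*(M 0 1)*(M 0 1)*(M 1 2) + ((-3:F))*(M 0 1)*(M 0 1)*(M 0 2) + ((-1:F))*(M 0 1)*(M 0 1)*(M 0 2)*(M 1 2) + ((-2:F))*(M 0 1)*(M 0 1)*(M 0 1) + ((-1:F))*(M 0 1)*(M 0 1)*(M 0 1)*(M 1 2) + ((-3:F))*(M 2 2) + ((-2:F))*(M 2 2)*(M 1 2) + ((-1:F))*(M 2 2)*(M 1 2)*(M 1 2) + ((-1:F))*(M 2 2)*(M 0 2) + ((-3:F))*(M 2 2)*(M 0 1) + ((-2:F))*(M 2 2)*(M 0 1)*(M 1 2) + ((-1:F))*(M 2 2)*(M 0 1)*(M 0 2) + ((1:F))*(M 2 2)*(M 0 1)*(M 0 2)*(M 1 2) + ((-3:F))*(M 2 2)*(M 0 1)*(M 0 1) + ((-1:F))*(M 2 2)*(M 0 1)*(M 0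 1)*(M 1 2) + ((-1:F))*(M 2 2)*(M 0 1)*(M 0 1)*(M 0 2) + ((-1:F))*(M 2 2)*(M 0 1)*(M 0 1)*(M 0 1) + ((-1:F))*(M 2 2)*(M 2 2)*(M 0 1) + ((-1:F))*(M 2 2)*(M 2 2)*(M 0 1)*(M 0 1) + ((-2:F))*(M 1 1) + ((-1:F))*(M 1 1)*(M 0 2) + ((1:F))*(M 1 1)*(M 0 2)*(M 0 2) + ((1:F))*(M 1 1)*(M 0 2)*(M 0 2)*(M 1 2) + ((-1:F))*(M 1 1)*(M 0 1)*(M 0 2) + ((-1:F))*(M 1 1)*(M 0 1)*(M 0 2)*(M 1 2) + ((-1:F))*(M 1 1)*(M 2 2) + ((-1:F))*(M 1 1)*(M 2 2)*(M 1 2) + ((1:F))*(M 1 1)*(M 2 2)*(M 0 1)*(M 0 2) + ((1:F))*(M 1 1)*(M 2 2)*(M 0 1)*(M 0 1) + ((1:F))*(M 1 1)*(M 1 1)*(M 0 2)*(M 0 2) + ((-1:F))*(M 1 1)*(M 1 1)*(M 2 2) + ((-2:F))*(M 0 0) + ((-2:F))*(M 0 0)*(M 1 2) + ((-1:F))*(M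 0 0)*(M 1 2)*(M 1 2) + ((-1:F))*(M 0 0)*(M 1 2)*(M 1 2)*(M 1 2) + ((1:F))*(M 0 0)*(M 0 2)*(M 1 2)*(M 1 2) + ((-1:F))*(M 0 0)*(M 0 1)*(M 1 2) + ((1:F))*(M 0 0)*(M 0 1)*(M 0 2) + ((1:F))*(M 0 0)*(M 0 1)*(M 0 2)*(M 1 2) + ((-1:F))*(M 0 0)*(M 0 1)*(M 0 1) + ((-1:F))*(M 0 0)*(M 0 1)*(M 0 1)*(M 1 2) + ((-1:F))*(M 0 0)*(M 2 2)*(M 1 2) + ((-1:F))*(M 0 0)*(M 2 2)*(M 1 2)*(M 1 2) + ((-1:F))*(M 0 0)*(M 2 2)*(M 0 1)*(M 0 1) + ((-2:F))*(M 0 0)*(M 1 1) + ((-1:F))*(M 0 0)*(M 1 1)*(M 1 2) + ((2:F))*(M 0 0)*(M 1 1)*(M 0 2)*(M 1 2) + ((-1:F))*(M 0 0)*(M 1 1)*(M 0 1) + ((1:F))*(M 0 0)*(M 1 1)*(M 0 1)*(M 0 2) + ((-2:F))*(M 0 0)*(M 1 1)*(M 2 2) + ((-1:F))*(M 0 0)*(M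 1 1)*(M 2 2)*(M 1 2) + ((-1:F))*(M 0 0)*(M 1 1)*(M 1 1) + ((1:F))*(M 0 0)*(M 1 1)*(M 1 1)*(M 0 2) + ((-1:F))*(M 0 0)*(M 1 1)*(M 1 1)*(M 2 2) + ((-1:F))*(M 0 0)*(M 0 0)*(M 1 2) + ((-1:F))*(M 0 0)*(M 0 0)*(M 1 1)) * h2
  have hz : M 0 0 + M 1 1 + M 2 2 - 1 = 0 := by
    have := sq_eq_zero_iff.mp key
    exact this
  rw [Matrix.trace_fin_three]
  linear_combination hz
end

section
/- Let F be a field (or more generally a commutative ring), let A be a k×k matrix over F, and let 2 ≤ r ≤ k. Then Σ_{π ∈ S_k} δ_r(P_π·A) = 0, where for a k×k matrix B, δ_r(B) = Σ_{J} det(B_J), the sum being over all r-element subsets J of {1,…,k} and B_J denoting the r×r submatrix of B whose rows and columns are those indexed by J. -/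
open Matrix

/-- for `2 ≤ r ≤ k`, `Σ_{π ∈ S_k} δ_r(P_π·A) = 0`, where
`δ_r(B) = Σ_{|J| = r} det(B_J)` is the sum of the principal `r × r` minors of `B`. -/
theorem stmt16 {R : Type*} [CommRing R] {k r : ℕ} (hr : 2 ≤ r) (hrk : r ≤ k)
    (A : Matrix (Fin k) (Fin k) R) :
    ∑ π : Equiv.Perm (Fin k),
      ∑ J ∈ Finset.powersetCard r (Finset.univ : Finset (Fin k)),
        ((permMat R π * A).submatrix (fun x : J => (x : Fin k))
          (fun x : J => (x : Fin k))).det = 0 := by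
  have hpm : ∀ π : Equiv.Perm (Fin k), permMat R π * A = A.submatrix π.symm id := by
    intro π
    ext i j
    simp only [Matrix.mul_apply, permMat, Matrix.of_apply, ite_mul, one_mul, zero_mul,
      Matrix.submatrix_apply, id]
    rw [Finset.sum_eq_single (π.symm i)]
    · simp
    · intro l _ hl
      rw [if_neg]
      intro h
      exact hl (by simp [← h])
    · simp
  rw [Finset.sum_comm]
  apply Finset.sum_eq_zero
  intro J hJ
  have hcard : 1 < J.card := by
    rw [Finset.mem_powersetCard] at hJ
    omega
  obtain ⟨a, ha, b, hb, hab⟩ := Finset.one_lt_card.mp hcard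
  apply Finset.sum_ninvolution (fun π => Equiv.swap a b * π)
  · intro π
    have key : ((permMat R (Equiv.swap a b * π) * A).submatrix (fun x : J => (x : Fin k))
          (fun x : J => (x : Fin k)))
        = ((permMat R π * A).submatrix (fun x : J => (x : Fin k))
          (fun x : J => (x : Fin k))).submatrix
            (Equiv.swap (⟨a, ha⟩ : J) (⟨b, hb⟩ : J)) id := by
      ext x y
      simp only [hpm, Matrix.submatrix_apply, id]
      congr 1
      have : (((Equiv.swap (⟨a, ha⟩ : J) (⟨b, hb⟩ : J)) x : Fin k))
          = Equiv.swap a b (x : Fin k) := by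
        rw [← Function.Injective.swap_apply Subtype.coe_injective]
      rw [this]
      simp [Equiv.Perm.mul_def, Equiv.symm_trans_apply]
    rw [key, Matrix.det_permute, Equiv.Perm.sign_swap]
    · push_cast
      ring
    · exact fun h => hab (congrArg Subtype.val h)
  · intro π _ h
    have : Equiv.swap a b = 1 := by
      have := congrArg (· * π⁻¹) h
      simpa using this
    have hba : Equiv.swap a b a = a := by rw [this]; rfl
    rw [Equiv.swap_apply_left] at hba
    exact hab hba.symm
  · intro π
    exact Finset.mem_univ _
  · intro π
    rw [← mul_assoc, Equiv.swap_mul_self, one_mul]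
end

section
/- Let F be a field (or more generally a commutative ring) and A = (a_{ij}) a k×k matrix over F with k ≥ 2. Then Σ_{π ∈ S_k} C_{P_π·A}(x) = k!·x^k − (k−1)!·( Σ_{i,j=1}^{k} a_{ij} )·x^{k−1}, where C_B(x) = det(x·I_k − B) denotes the characteristic polynomial of a k×k matrix B and P_π is the permutation matrix of π. -/
open Matrix Finset Equiv Equiv.Perm Polynomial


open Matrix

lemma permMat_mul_apply {R : Type*} [CommRing R] {n : Type*} [Fintype n] [DecidableEq n]
    (π : Equiv.Perm n) (A : Matrix n n R) (i j : n) :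
    (permMat R π * A) i j = A (π⁻¹ i) j := by
  rw [Matrix.mul_apply]
  simp only [permMat, Matrix.of_apply, ite_mul, one_mul, zero_mul]
  rw [Finset.sum_eq_single (π⁻¹ i)]
  · simp
  · intro b _ hb
    rw [if_neg]
    intro h
    exact hb (by simp [← h])
  · simp

/-- aux: product of indicator-ite. -/
lemma prodIteFix {S : Type*} [CommRing S] {n : Type*} [DecidableEq n]
    (t : Finset n) (p : n → Prop) [DecidablePred p] (x : S) :
    (∏ i ∈ t, if p i then x else 0) = if ∀ i ∈ t, p i then x ^ t.card else 0 := by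
  by_cases h : ∀ i ∈ t, p i
  · rw [if_pos h, Finset.prod_congr rfl (fun i hi => if_pos (h i hi)), Finset.prod_const]
  · rw [if_neg h]
    push_neg at h
    obtain ⟨i, hi, hpi⟩ := h
    exact Finset.prod_eq_zero hi (if_neg hpi)

/-- aux: sum of signs over permutations fixing `t` pointwise vanishes when the
complement has at least two elements. -/
lemma signSumZero' {S : Type*} [CommRing S] {n : Type*} [Fintype n] [DecidableEq n]
    (t : Finset n) (h2 : 2 ≤ (univ \ t).card) :
    ∑ σ : Perm n, (if ∀ i ∈ t, σ i = i then ((Perm.sign σ : ℤ) : S) else 0) = 0 := by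
  classical
  rw [← Finset.sum_filter]
  obtain ⟨a, ha, b, hb, hab⟩ := Finset.one_lt_card.mp h2
  rw [Finset.mem_sdiff] at ha hb
  refine Finset.sum_involution (fun σ _ => σ * Equiv.swap a b) ?_ ?_ ?_ ?_
  · intro σ _
    rw [Equiv.Perm.sign_mul, Equiv.Perm.sign_swap hab]
    push_cast
    ring
  · intro σ _ _
    intro heq
    have : Equiv.swap a b = 1 := mul_left_cancel (a := σ) (by rw [mul_one]; exact heq)
    exact hab (Equiv.swap_eq_one_iff.mp this)
  · intro σ hσ
    simp only [Finset.mem_filter, Finset.mem_univ, true_and] at hσ ⊢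
    intro i hi
    have hia : i ≠ a := fun h => ha.2 (h ▸ hi)
    have hib : i ≠ b := fun h => hb.2 (h ▸ hi)
    rw [Equiv.Perm.mul_apply, Equiv.swap_apply_of_ne_of_ne hia hib]
    exact hσ i hi
  · intro σ _
    simp only [mul_assoc, Equiv.swap_mul_self, mul_one]

/-- aux: only the identity fixes `t` pointwise when the complement has at most one element,
so the sign sum is 1. -/
lemma signSumOne' {S : Type*} [CommRing S] {n : Type*} [Fintype n] [DecidableEq n]
    (t : Finset n) (h : (univ \ t).card ≤ 1) :
    ∑ σ : Perm n, (if ∀ i ∈ t, σ i = i then ((Perm.sign σ : ℤ) : S) else 0) = 1 := by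
  classical
  have key : ∀ σ : Perm n, (∀ i ∈ t, σ i = i) → σ = 1 := by
    intro σ hσ
    ext i
    by_cases hi : i ∈ t
    · exact hσ i hi
    · by_cases hσi : σ i ∈ t
      · have : σ (σ i) = σ i := hσ _ hσi
        have := σ.injective this
        simp [this] at hσi
        exact absurd hσi hi
      · have h1 : i ∈ univ \ t := by simp [hi]
        have h2 : σ i ∈ univ \ t := by simp [hσi]
        exact Finset.card_le_one.mp h _ h2 _ h1
  rw [Fintype.sum_eq_single (1 : Perm n)]
  · simp
  · intro σ hσ
    rw [if_neg]
    intro hfix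
    exact hσ (key σ hfix)

lemma signSumZero {S : Type*} [CommRing S] {n : Type*} [Fintype n] [DecidableEq n]
    (t : Finset n) (D : (σ : Perm n) → Decidable (∀ i ∈ t, σ i = i))
    (h2 : 2 ≤ (univ \ t).card) :
    ∑ σ : Perm n, (@ite S (∀ i ∈ t, σ i = i) (D σ) ((Perm.sign σ : ℤ) : S) 0) = 0 := by
  refine Eq.trans (Finset.sum_congr rfl fun σ _ => ?_) (signSumZero' t h2)
  by_cases h : ∀ i ∈ t, σ i = i
  · simp only [if_pos h]
  · simp only [if_neg h]

lemma signSumOne {S : Type*} [CommRing S] {n : Type*} [Fintype n] [DecidableEq n]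
    (t : Finset n) (D : (σ : Perm n) → Decidable (∀ i ∈ t, σ i = i))
    (h : (univ \ t).card ≤ 1) :
    ∑ σ : Perm n, (@ite S (∀ i ∈ t, σ i = i) (D σ) ((Perm.sign σ : ℤ) : S) 0) = 1 := by
  refine Eq.trans (Finset.sum_congr rfl fun σ _ => ?_) (signSumOne' t h)
  by_cases hσ : ∀ i ∈ t, σ i = i
  · simp only [if_pos hσ]
  · simp only [if_neg hσ]

/-- aux: summing `g (τ j)` over all permutations. -/
lemma sumPermEval {S : Type*} [AddCommMonoid S] {m : ℕ} (j : Fin (m + 1))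
    (g : Fin (m + 1) → S) :
    ∑ τ : Perm (Fin (m + 1)), g (τ j) = m.factorial • ∑ i, g i := by
  have h0 : ∑ τ : Perm (Fin (m + 1)), g (τ j) = ∑ τ : Perm (Fin (m + 1)), g (τ 0) := by
    rw [← Equiv.sum_comp (Equiv.mulRight (Equiv.swap (0 : Fin (m+1)) j))
      (fun τ => g (τ j))]
    refine Fintype.sum_congr _ _ fun τ => ?_
    simp [Equiv.Perm.mul_apply]
  rw [h0, ← Equiv.sum_comp (Equiv.Perm.decomposeFin.symm) (fun τ => g (τ 0)),
    Fintype.sum_prod_type]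
  simp only [Equiv.Perm.decomposeFin_symm_apply_zero]
  rw [Finset.sum_comm]
  simp [Finset.sum_const, Fintype.card_perm, Fintype.card_fin, Finset.smul_sum]


/-- for `k ≥ 2` and a `k × k` matrix `A`, the sum of the characteristic
polynomials of all row permutations of `A` is
`k!·x^k − (k−1)!·(Σ_{i,j} a_{ij})·x^{k−1}`. -/
theorem stmt17 {R : Type*} [CommRing R] {k : ℕ} (hk : 2 ≤ k)
    (A : Matrix (Fin k) (Fin k) R) :
    ∑ π : Equiv.Perm (Fin k), (permMat R π * A).charpoly =
      Polynomial.C ((k.factorial : ℕ) : R) * Polynomial.X ^ k -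
        Polynomial.C (((k - 1).factorial : R) * ∑ i, ∑ j, A i j) *
          Polynomial.X ^ (k - 1) := by
  classical
  obtain ⟨m, rfl⟩ : ∃ m, k = m + 2 := ⟨k - 2, by omega⟩
  -- Step 1: expand charpoly as a double sum
  have step1 : ∑ π : Perm (Fin (m+2)), (permMat R π * A).charpoly =
      ∑ σ : Perm (Fin (m+2)), ∑ τ : Perm (Fin (m+2)), ((Perm.sign σ : ℤ) : R[X]) *
        ∏ i, ((if σ i = i then (X : R[X]) else 0) - C (A (τ i) i)) := by
    have e1 : ∑ π : Perm (Fin (m+2)), (permMat R π * A).charpoly =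
        ∑ π : Perm (Fin (m+2)), ∑ σ : Perm (Fin (m+2)), ((Perm.sign σ : ℤ) : R[X]) *
          ∏ i, ((if σ i = i then (X : R[X]) else 0) - C (A (π⁻¹ (σ i)) i)) := by
      refine Fintype.sum_congr _ _ fun π => ?_
      rw [Matrix.charpoly, Matrix.det_apply']
      refine Fintype.sum_congr _ _ fun σ => ?_
      congr 1
      refine Finset.prod_congr rfl fun i _ => ?_
      rw [charmatrix_apply, permMat_mul_apply, Matrix.diagonal_apply]
    rw [e1, Finset.sum_comm]
    refine Fintype.sum_congr _ _ fun σ => ?_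
    exact Fintype.sum_equiv ((Equiv.inv (Perm (Fin (m+2)))).trans (Equiv.mulRight σ)) _ _ fun π => rfl
  -- Step 2: expand the product over subsets
  have step2 : ∑ π : Perm (Fin (m+2)), (permMat R π * A).charpoly =
      ∑ t ∈ (Finset.univ : Finset (Fin (m+2))).powerset,
        (∑ σ : Perm (Fin (m+2)), (if ∀ i ∈ t, σ i = i then ((Perm.sign σ : ℤ) : R[X]) else 0)) *
        ((X : R[X]) ^ t.card * ∑ τ : Perm (Fin (m+2)), ∏ i ∈ univ \ t, (-C (A (τ i) i))) := by
    rw [step1]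
    have e2 : ∀ σ τ : Perm (Fin (m+2)),
        ((Perm.sign σ : ℤ) : R[X]) *
          ∏ i, ((if σ i = i then (X : R[X]) else 0) - C (A (τ i) i)) =
        ∑ t ∈ (Finset.univ : Finset (Fin (m+2))).powerset,
          (if ∀ i ∈ t, σ i = i then ((Perm.sign σ : ℤ) : R[X]) else 0) *
          ((X : R[X]) ^ t.card * ∏ i ∈ univ \ t, (-C (A (τ i) i))) := by
      intro σ τ
      have : ∏ i, ((if σ i = i then (X : R[X]) else 0) - C (A (τ i) i)) =
          ∑ t ∈ (Finset.univ : Finset (Fin (m+2))).powerset,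
            (if ∀ i ∈ t, σ i = i then (X : R[X]) ^ t.card else 0) *
              ∏ i ∈ univ \ t, (-C (A (τ i) i)) := by
        simp_rw [sub_eq_add_neg]
        rw [Finset.prod_add]
        refine Finset.sum_congr rfl fun t _ => ?_
        rw [prodIteFix]
        congr 1
        congr 1
      rw [this, Finset.mul_sum]
      refine Finset.sum_congr rfl fun t _ => ?_
      by_cases h : ∀ i ∈ t, σ i = i <;> simp [h]
    calc ∑ σ : Perm (Fin (m+2)), ∑ τ : Perm (Fin (m+2)), ((Perm.sign σ : ℤ) : R[X]) *
          ∏ i, ((if σ i = i then (X : R[X]) else 0) - C (A (τ i) i))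
        = ∑ σ : Perm (Fin (m+2)), ∑ τ : Perm (Fin (m+2)), ∑ t ∈ (Finset.univ : Finset (Fin (m+2))).powerset,
            (if ∀ i ∈ t, σ i = i then ((Perm.sign σ : ℤ) : R[X]) else 0) *
            ((X : R[X]) ^ t.card * ∏ i ∈ univ \ t, (-C (A (τ i) i))) := by
          exact Fintype.sum_congr _ _ fun σ => Fintype.sum_congr _ _ fun τ => e2 σ τ
      _ = ∑ σ : Perm (Fin (m+2)), ∑ t ∈ (Finset.univ : Finset (Fin (m+2))).powerset, ∑ τ : Perm (Fin (m+2)),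
            (if ∀ i ∈ t, σ i = i then ((Perm.sign σ : ℤ) : R[X]) else 0) *
            ((X : R[X]) ^ t.card * ∏ i ∈ univ \ t, (-C (A (τ i) i))) := by
          exact Fintype.sum_congr _ _ fun σ => Finset.sum_comm
      _ = ∑ t ∈ (Finset.univ : Finset (Fin (m+2))).powerset, ∑ σ : Perm (Fin (m+2)), ∑ τ : Perm (Fin (m+2)),
            (if ∀ i ∈ t, σ i = i then ((Perm.sign σ : ℤ) : R[X]) else 0) *
            ((X : R[X]) ^ t.card * ∏ i ∈ univ \ t, (-C (A (τ i) i))) := Finset.sum_comm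
      _ = _ := by
          refine Finset.sum_congr rfl fun t _ => ?_
          conv_rhs => rw [Finset.mul_sum, Finset.sum_mul_sum]
  rw [step2]
  have hzero : ∀ t ∈ (univ : Finset (Fin (m+2))).powerset,
      ((∑ σ : Perm (Fin (m+2)), if ∀ i ∈ t, σ i = i then ((Perm.sign σ : ℤ) : R[X]) else 0) *
        ((X : R[X]) ^ t.card * ∑ τ : Perm (Fin (m+2)), ∏ i ∈ univ \ t, (-C (A (τ i) i)))) ≠ 0 →
      (univ \ t).card ≤ 1 := by
    intro t _ hne
    by_contra h
    push_neg at h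
    rw [signSumZero t _ h, zero_mul] at hne
    exact hne rfl
  rw [← Finset.sum_filter_of_ne hzero]
  have hfilter : ((univ : Finset (Fin (m+2))).powerset.filter fun t => (univ \ t).card ≤ 1) =
      insert (univ : Finset (Fin (m+2))) (univ.image fun j => univ.erase j) := by
    ext s
    simp only [Finset.mem_filter, Finset.mem_powerset, Finset.mem_insert, Finset.mem_image,
      Finset.mem_univ, true_and]
    constructor
    · rintro ⟨hs, hcard⟩
      rcases Nat.le_one_iff_eq_zero_or_eq_one.mp hcard with h0 | h1
      · left
        have hsub : (univ : Finset (Fin (m+2))) ⊆ s := by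
          intro x _
          by_contra hxs
          have hx : x ∈ univ \ s := by simp [hxs]
          rw [Finset.card_eq_zero.mp h0] at hx
          exact absurd hx (Finset.notMem_empty x)
        exact Finset.Subset.antisymm hs hsub
      · right
        obtain ⟨j, hj⟩ := Finset.card_eq_one.mp h1
        refine ⟨j, ?_⟩
        have hss : univ \ (univ \ s) = s := Finset.sdiff_sdiff_eq_self hs
        rw [hj] at hss
        rw [Finset.erase_eq]
        exact hss
    · rintro (rfl | ⟨j, rfl⟩)
      · simp
      · refine ⟨Finset.erase_subset _ _, ?_⟩
        have hj : univ \ univ.erase j = {j} := by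
          rw [Finset.erase_eq, Finset.sdiff_sdiff_eq_self (by simp)]
        rw [hj, Finset.card_singleton]
  rw [hfilter]
  have hnotmem : (univ : Finset (Fin (m+2))) ∉ univ.image fun j : Fin (m+2) => univ.erase j := by
    intro hmem
    obtain ⟨j, _, hj⟩ := Finset.mem_image.mp hmem
    have := congrArg Finset.card hj
    rw [Finset.card_erase_of_mem (Finset.mem_univ j), Finset.card_univ, Fintype.card_fin] at this
    omega
  have hinj : ∀ x ∈ (univ : Finset (Fin (m+2))), ∀ y ∈ univ,
      univ.erase x = univ.erase y → x = y := by
    intro x _ y _ h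
    by_contra hxy
    have hx : x ∈ univ.erase y := Finset.mem_erase.mpr ⟨hxy, Finset.mem_univ x⟩
    rw [← h] at hx
    exact (Finset.mem_erase.mp hx).1 rfl
  rw [Finset.sum_insert hnotmem, Finset.sum_image hinj]
  -- compute the `univ` term
  have hcard_univ : (univ : Finset (Fin (m+2))).card = m + 2 := by
    rw [Finset.card_univ, Fintype.card_fin]
  have huterm : (∑ σ : Perm (Fin (m+2)),
        if ∀ i ∈ (univ : Finset (Fin (m+2))), σ i = i then ((Perm.sign σ : ℤ) : R[X]) else 0) *
      ((X : R[X]) ^ (univ : Finset (Fin (m+2))).card *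
        ∑ τ : Perm (Fin (m+2)), ∏ i ∈ univ \ univ, (-C (A (τ i) i))) =
      Polynomial.C (((m+2).factorial : ℕ) : R) * X ^ (m+2) := by
    rw [signSumOne univ _ (by simp), one_mul, hcard_univ, Finset.sdiff_self]
    simp only [Finset.prod_empty]
    rw [Finset.sum_const, Finset.card_univ, Fintype.card_perm, Fintype.card_fin]
    rw [nsmul_eq_mul, mul_one]
    rw [map_natCast (C : R →+* R[X])]
    ring
  rw [huterm]
  -- compute the `erase` terms
  have heterm : ∀ j : Fin (m+2), (∑ σ : Perm (Fin (m+2)),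
        if ∀ i ∈ (univ : Finset (Fin (m+2))).erase j, σ i = i
          then ((Perm.sign σ : ℤ) : R[X]) else 0) *
      ((X : R[X]) ^ ((univ : Finset (Fin (m+2))).erase j).card *
        ∑ τ : Perm (Fin (m+2)), ∏ i ∈ univ \ univ.erase j, (-C (A (τ i) i))) =
      -(Polynomial.C (((m+1).factorial : R) * ∑ i, A i j) * X ^ (m+1)) := by
    intro j
    have hdiff : (univ : Finset (Fin (m+2))) \ univ.erase j = {j} := by
      rw [Finset.erase_eq, Finset.sdiff_sdiff_eq_self (by simp)]
    rw [signSumOne (univ.erase j) _ (by rw [hdiff, Finset.card_singleton]), one_mul]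
    rw [Finset.card_erase_of_mem (Finset.mem_univ j), hcard_univ, show m + 2 - 1 = m + 1 from rfl]
    simp only [hdiff, Finset.prod_singleton]
    have hsum : ∑ τ : Perm (Fin (m+2)), -C (A (τ j) j) =
        -((m+1).factorial • ∑ i, C (A i j)) := by
      rw [← sumPermEval j (fun i => C (A i j)), ← Finset.sum_neg_distrib]
    rw [hsum, ← map_sum, nsmul_eq_mul, _root_.map_mul, map_natCast (C : R →+* R[X])]
    ring
  rw [Finset.sum_congr rfl fun j _ => heterm j]
  rw [show (m + 2) - 1 = m + 1 from rfl]
  rw [Finset.sum_comm (γ := Fin (m+2)) (f := fun i j => A i j)]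
  rw [Finset.sum_neg_distrib, ← Finset.sum_mul, ← map_sum, ← Finset.mul_sum]
  ring
end

section
/- Let F be a field, n ≥ 4, and let G = (I_2 | A) be a 2×n matrix in standard form over F. If G is not an LCED matrix, then the sum of the entries on each of the two rows of G is 0 and the sum of the entries on each of the n columns of G is 1. -/
open Matrix

private lemma sum_if_eq {F : Type*} [Field F] {m : ℕ} (t : Fin m) (g f : Fin m → F) :
    ∑ j, (if j = t then g j else f j) = g t - f t + ∑ j, f j := by
  have h1 : ∀ j, (if j = t then g j else f j) = f j + (if j = t then g t - f t else 0) := by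
    intro j
    by_cases hj : j = t
    · subst hj; simp
    · simp [hj]
  simp_rw [h1]
  rw [Finset.sum_add_distrib, Finset.sum_ite_eq' Finset.univ t]
  simp
  ring

/-- for `n ≥ 4`, if the `2 × n` standard-form matrix `G = (I_2 | A)` is not
an LCED matrix, then every row of `G` sums to `0` and every column of `G` sums to `1`. -/
theorem stmt19 {F : Type*} [Field F] {m : ℕ} (hm : 2 ≤ m)
    (A : Matrix (Fin 2) (Fin m) F)
    (h : ¬ IsLCEDMatrix (fromCols (1 : Matrix (Fin 2) (Fin 2) F) A)) :
    (∀ i, ∑ j, fromCols (1 : Matrix (Fin 2) (Fin 2) F) A i j = 0) ∧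
    (∀ j, ∑ i, fromCols (1 : Matrix (Fin 2) (Fin 2) F) A i j = 1) := by
  classical
  set G := fromCols (1 : Matrix (Fin 2) (Fin 2) F) A with hG
  have hGl : ∀ (a b : Fin 2), G a (Sum.inl b) = if a = b then 1 else 0 := by
    intro a b; rw [hG, fromCols_apply_inl, Matrix.one_apply]
  have hGr : ∀ (a : Fin 2) (j : Fin m), G a (Sum.inr j) = A a j := by
    intro a j; rw [hG, fromCols_apply_inr]
  have hdet : ∀ σ : Equiv.Perm (Fin 2 ⊕ Fin m), (G * permMat F σ * Gᵀ).det = 0 := by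
    intro σ
    by_contra hne
    exact h ⟨σ, (Matrix.isUnit_iff_isUnit_det _).mpr (isUnit_iff_ne_zero.mpr hne)⟩
  have hGP : ∀ (σ : Equiv.Perm (Fin 2 ⊕ Fin m)) a c, (G * permMat F σ) a c = G a (σ c) := by
    intro σ a c
    rw [Matrix.mul_apply]
    simp [permMat, mul_ite]
  have hent : ∀ (σ : Equiv.Perm (Fin 2 ⊕ Fin m)) a b, (G * permMat F σ * Gᵀ) a b =
      (G a (σ (Sum.inl 0)) * G b (Sum.inl 0) + G a (σ (Sum.inl 1)) * G b (Sum.inl 1)) +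
        ∑ j, G a (σ (Sum.inr j)) * A b j := by
    intro σ a b
    rw [Matrix.mul_apply]
    simp only [Matrix.transpose_apply, hGP]
    rw [Fintype.sum_sum_type, Fin.sum_univ_two]
    simp only [hGr]
  have hE : ∀ σ : Equiv.Perm (Fin 2 ⊕ Fin m),
        ((G 0 (σ (Sum.inl 0)) * G 0 (Sum.inl 0) + G 0 (σ (Sum.inl 1)) * G 0 (Sum.inl 1)) +
        ∑ j, G 0 (σ (Sum.inr j)) * A 0 j) *
        ((G 1 (σ (Sum.inl 0)) * G 1 (Sum.inl 0) + G 1 (σ (Sum.inl 1)) * G 1 (Sum.inl 1)) +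
        ∑ j, G 1 (σ (Sum.inr j)) * A 1 j) -
        ((G 0 (σ (Sum.inl 0)) * G 1 (Sum.inl 0) + G 0 (σ (Sum.inl 1)) * G 1 (Sum.inl 1)) +
        ∑ j, G 0 (σ (Sum.inr j)) * A 1 j) *
        ((G 1 (σ (Sum.inl 0)) * G 0 (Sum.inl 0) + G 1 (σ (Sum.inl 1)) * G 0 (Sum.inl 1)) +
        ∑ j, G 1 (σ (Sum.inr j)) * A 0 j) = 0 := by
    intro σ
    have hd := hdet σ
    rw [Matrix.det_fin_two, hent σ 0 0, hent σ 1 1, hent σ 0 1, hent σ 1 0] at hd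
    exact hd
  -- helper for sums over inr for permutations fixing all inr except possibly t
  have hsum2 : ∀ (σ : Equiv.Perm (Fin 2 ⊕ Fin m)) (a b : Fin 2) (t : Fin m)
      (v : Fin 2 ⊕ Fin m), (∀ j, σ (Sum.inr j) = if j = t then v else Sum.inr j) →
      ∑ j, G a (σ (Sum.inr j)) * A b j
        = G a v * A b t - A a t * A b t + ∑ j, A a j * A b j := by
    intro σ a b t v hσ
    simp_rw [hσ, apply_ite (G a), ite_mul]
    rw [sum_if_eq t (fun j => G a v * A b j) (fun j => G a (Sum.inr j) * A b j)]
    simp only [hGr]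
  obtain ⟨sP, hsP⟩ : ∃ t, (∑ j, A 0 j * A 0 j) = t := ⟨_, rfl⟩
  obtain ⟨sQ, hsQ⟩ : ∃ t, (∑ j, A 0 j * A 1 j) = t := ⟨_, rfl⟩
  obtain ⟨sR, hsR⟩ : ∃ t, (∑ j, A 1 j * A 1 j) = t := ⟨_, rfl⟩
  have hsQ' : (∑ j, A 1 j * A 0 j) = sQ := by
    rw [← hsQ]; exact Finset.sum_congr rfl fun j _ => mul_comm _ _
  -- equation from the identity permutation
  have he1 : (1 + sP) * (1 + sR) - sQ * sQ = 0 := by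
    have hd := hE 1
    simp only [Equiv.Perm.one_apply, hGl, hGr] at hd
    rw [hsP, hsQ, hsQ', hsR] at hd
    norm_num at hd
    linear_combination hd
  -- equation from the swap of the two identity columns
  have hfixswap : ∀ (a b : Fin 2), ∑ j, G a ((Equiv.swap (Sum.inl 0 : Fin 2 ⊕ Fin m) (Sum.inl 1)) (Sum.inr j)) * A b j = ∑ j, A a j * A b j :=
    fun a b => Finset.sum_congr rfl fun j _ => by
      rw [Equiv.swap_apply_of_ne_of_ne (by simp) (by simp), hGr]
  have he2 : sP * sR - (sQ + 1) * (sQ + 1) = 0 := by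
    have hd := hE (Equiv.swap (Sum.inl 0) (Sum.inl 1))
    rw [hfixswap 0 0, hfixswap 1 1, hfixswap 0 1, hfixswap 1 0] at hd
    simp only [Equiv.swap_apply_left, Equiv.swap_apply_right, hGl] at hd
    rw [hsP, hsQ, hsQ', hsR] at hd
    norm_num at hd
    linear_combination hd
  -- the key column identity
  have key : ∀ t : Fin m, A 0 t + A 1 t = 1 := by
    intro t
    -- equation from the swap (inl 0, inr t)
    have hdesc3 : ∀ j : Fin m, (Equiv.swap (Sum.inl 0 : Fin 2 ⊕ Fin m) (Sum.inr t)) (Sum.inr j)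
        = if j = t then Sum.inl 0 else Sum.inr j := by
      intro j
      by_cases hj : j = t
      · subst hj; simp [Equiv.swap_apply_right]
      · rw [if_neg hj]
        exact Equiv.swap_apply_of_ne_of_ne (by simp) (by simp [hj])
    have h3l1 : (Equiv.swap (Sum.inl 0 : Fin 2 ⊕ Fin m) (Sum.inr t)) (Sum.inl 1) = Sum.inl 1 :=
      Equiv.swap_apply_of_ne_of_ne (by simp) (by simp)
    have he3 : (sP + 2 * A 0 t - A 0 t * A 0 t) * (sR + 1 - A 1 t * A 1 t)
        - (sQ + A 1 t - A 0 t * A 1 t) * (sQ + A 1 t - A 0 t * A 1 t) = 0 := by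
      have hd := hE (Equiv.swap (Sum.inl 0) (Sum.inr t))
      rw [hsum2 _ 0 0 t _ hdesc3, hsum2 _ 1 1 t _ hdesc3,
        hsum2 _ 0 1 t _ hdesc3, hsum2 _ 1 0 t _ hdesc3] at hd
      simp only [Equiv.swap_apply_left, h3l1, hGl, hGr] at hd
      rw [hsP, hsQ, hsQ', hsR] at hd
      norm_num at hd
      linear_combination hd
    -- equation from the swap (inl 1, inr t)
    have hdesc4 : ∀ j : Fin m, (Equiv.swap (Sum.inl 1 : Fin 2 ⊕ Fin m) (Sum.inr t)) (Sum.inr j)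
        = if j = t then Sum.inl 1 else Sum.inr j := by
      intro j
      by_cases hj : j = t
      · subst hj; simp [Equiv.swap_apply_right]
      · rw [if_neg hj]
        exact Equiv.swap_apply_of_ne_of_ne (by simp) (by simp [hj])
    have h4l0 : (Equiv.swap (Sum.inl 1 : Fin 2 ⊕ Fin m) (Sum.inr t)) (Sum.inl 0) = Sum.inl 0 :=
      Equiv.swap_apply_of_ne_of_ne (by simp) (by simp)
    have he4 : (sP + 1 - A 0 t * A 0 t) * (sR + 2 * A 1 t - A 1 t * A 1 t)
        - (sQ + A 0 t - A 0 t * A 1 t) * (sQ + A 0 t - A 0 t * A 1 t) = 0 := by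
      have hd := hE (Equiv.swap (Sum.inl 1) (Sum.inr t))
      rw [hsum2 _ 0 0 t _ hdesc4, hsum2 _ 1 1 t _ hdesc4,
        hsum2 _ 0 1 t _ hdesc4, hsum2 _ 1 0 t _ hdesc4] at hd
      simp only [Equiv.swap_apply_left, h4l0, hGl, hGr] at hd
      rw [hsP, hsQ, hsQ', hsR] at hd
      norm_num at hd
      linear_combination hd
    -- equation from the 3-cycle (inl 0 → inl 1 → inr t → inl 0)
    obtain ⟨σ5, hσ5⟩ : ∃ σ : Equiv.Perm (Fin 2 ⊕ Fin m),
        σ = Equiv.swap (Sum.inl 0) (Sum.inr t) * Equiv.swap (Sum.inl 0) (Sum.inl 1) := ⟨_, rfl⟩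
    have hdesc5 : ∀ j : Fin m, σ5 (Sum.inr j)
        = if j = t then Sum.inl 0 else Sum.inr j := by
      intro j
      have hin : (Equiv.swap (Sum.inl 0 : Fin 2 ⊕ Fin m) (Sum.inl 1)) (Sum.inr j) = Sum.inr j :=
        Equiv.swap_apply_of_ne_of_ne (by simp) (by simp)
      rw [hσ5, Equiv.Perm.mul_apply, hin]
      by_cases hj : j = t
      · subst hj; simp [Equiv.swap_apply_right]
      · rw [if_neg hj]
        exact Equiv.swap_apply_of_ne_of_ne (by simp) (by simp [hj])
    have h5l0 : σ5 (Sum.inl 0) = Sum.inl 1 := by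
      rw [hσ5, Equiv.Perm.mul_apply, Equiv.swap_apply_left]
      exact Equiv.swap_apply_of_ne_of_ne (by simp) (by simp)
    have h5l1 : σ5 (Sum.inl 1) = Sum.inr t := by
      rw [hσ5, Equiv.Perm.mul_apply, Equiv.swap_apply_right, Equiv.swap_apply_left]
    have he5 : (sP - A 0 t * A 0 t + A 0 t) * (sR - A 1 t * A 1 t + A 1 t)
        - (sQ - A 0 t * A 1 t + A 1 t + A 0 t) * (sQ - A 0 t * A 1 t + 1) = 0 := by
      have hd := hE σ5
      rw [hsum2 _ 0 0 t _ hdesc5, hsum2 _ 1 1 t _ hdesc5,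
        hsum2 _ 0 1 t _ hdesc5, hsum2 _ 1 0 t _ hdesc5] at hd
      simp only [h5l0, h5l1, hGl, hGr] at hd
      rw [hsP, hsQ, hsQ', hsR] at hd
      norm_num at hd
      linear_combination hd
    rcases eq_or_ne (2 : F) 0 with h2 | h2
    · -- characteristic two case, generated certificate
      linear_combination (exp := 6) ((1) + (1) * (A 1 t) + (1) * (A 1 t)^3 + (-1) * (A 1 t)^4 + (1) * (A 0 t) + (1) * (A 0 t) * (A 1 t)^2 + (1) * (A 0 t)^2 * (A 1 t) + (1) * (A 0 t)^3 + (1) * (A 0 t)^4 + (1) * sR + (1) * sR * (A 1 t)^2 + (1) * sR * (A 0 t)^2 + (1) * sQ + (1) * sQ * (A 1 t)^2 + (1) * sQ * (A 0 t)^2) * he1 +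
        ((1) + (1) * (A 1 t)^4 + (1) * (A 0 t) + (-1) * (A 0 t) * (A 1 t)^4 + (1) * (A 0 t)^2 * (A 1 t) + (-2) * (A 0 t)^2 * (A 1 t)^2 + (1) * (A 0 t)^2 * (A 1 t)^3 + (-2) * (A 0 t)^2 * (A 1 t)^4 + (1) * (A 0 t)^3 + (-1) * (A 0 t)^3 * (A 1 t)^2 + (1) * (A 0 t)^4 + (1) * (A 0 t)^4 * (A 1 t) + (-2) * (A 0 t)^4 * (A 1 t)^2 + (1) * sR * (A 0 t)^2 + (1) * sR * (A 0 t)^2 * (A 1 t)^2 + (1) * sR * (A 0 t)^4 + (1) * sQ + (1) * sQ * (A 1 t) + (1) * sQ * (A 1 t)^2 + (1) * sQ * (A 1 t)^3 + (1) * sQ * (A 0 t) * (A 1 t) + (1) * sQ * (A 0 t) * (A 1 t)^3 + (1) * sQ * (A 0 t)^2 + (1) * sQ * (A 0 t)^2 * (A 1 t) + (1) * sQ * (A 0 t)^3 * (A 1 t)) * he3 +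
        ((1) * (A 1 t) + (1) * (A 1 t)^3 + (1) * (A 0 t) * (A 1 t)^2 + (1) * (A 0 t) * (A 1 t)^4 + (-1) * (A 0 t)^2 * (A 1 t)^3 + (-2) * (A 0 t)^2 * (A 1 t)^4 + (1) * (A 0 t)^3 * (A 1 t)^2 + (-1) * (A 0 t)^4 * (A 1 t) + (-2) * (A 0 t)^4 * (A 1 t)^2 + (1) * sR + (1) * sR * (A 1 t)^2 + (1) * sR * (A 0 t)^2 * (A 1 t)^2 + (1) * sR * (A 0 t)^4 + (1) * sQ + (1) * sQ * (A 1 t)^2 + (1) * sQ * (A 0 t) + (1) * sQ * (A 0 t) * (A 1 t) + (1) * sQ * (A 0 t) * (A 1 t)^2 + (1) * sQ * (A 0 t) * (A 1 t)^3 + (1) * sQ * (A 0 t)^2 + (1) * sQ * (A 0 t)^3 + (1) * sQ * (A 0 t)^3 * (A 1 t)) * he4 +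
        ((1) + (1) * (A 1 t)^4 + (1) * (A 0 t)^4 + (1) * sQ + (1) * sQ * (A 1 t) + (1) * sQ * (A 1 t)^2 + (1) * sQ * (A 1 t)^3 + (1) * sQ * (A 0 t) + (1) * sQ * (A 0 t) * (A 1 t)^2 + (1) * sQ * (A 0 t)^2 + (1) * sQ * (A 0 t)^2 * (A 1 t) + (1) * sQ * (A 0 t)^3) * he5 +
        ((-3) * (A 1 t) + (7) * (A 1 t)^2 + (-10) * (A 1 t)^3 + (7) * (A 1 t)^4 + (-2) * (A 1 t)^5 + (1) * (A 1 t)^6 + (-4) * (A 0 t) + (14) * (A 0 t) * (A 1 t) + (-30) * (A 0 t) * (A 1 t)^2 + (29) * (A 0 t) * (A 1 t)^3 + (-15) * (A 0 t) * (A 1 t)^4 + (1) * (A 0 t) * (A 1 t)^5 + (7) * (A 0 t)^2 + (-30) * (A 0 t)^2 * (A 1 t) + (45) * (A 0 t)^2 * (A 1 t)^2 + (-29) * (A 0 t)^2 * (A 1 t)^3 + (9) * (A 0 t)^2 * (A 1 t)^4 + (2) * (A 0 t)^2 * (A 1 t)^5 + (-2) * (A 0 t)^2 * (A 1 t)^6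 + (-10) * (A 0 t)^3 + (29) * (A 0 t)^3 * (A 1 t) + (-27) * (A 0 t)^3 * (A 1 t)^2 + (8) * (A 0 t)^3 * (A 1 t)^3 + (2) * (A 0 t)^3 * (A 1 t)^4 + (6) * (A 0 t)^4 + (-14) * (A 0 t)^4 * (A 1 t) + (9) * (A 0 t)^4 * (A 1 t)^2 + (2) * (A 0 t)^4 * (A 1 t)^3 + (-4) * (A 0 t)^4 * (A 1 t)^4 + (-3) * (A 0 t)^5 + (1) * (A 0 t)^5 * (A 1 t) + (2) * (A 0 t)^5 * (A 1 t)^2 + (1) * (A 0 t)^6 + (-2) * (A 0 t)^6 * (A 1 t)^2 + (-1) * sR + (-2) * sR * (A 1 t) + (-2) * sR * (A 1 t)^3 + (1) * sR * (A 1 t)^4 + (-2) * sR * (A 0 t) + (-1) * sR * (A 0 t) * (A 1 t)^2 + (-2) * sR * (A 0 t) * (A 1 t)^4 + (1) * sR * (A 0 t)^2 * (A 1 t)^2 + (4) * sR * (A 0 t)^2 * (A 1 t)^4 + (-1) * sR * (A 0 t)^3 + (-1) * sR * (A 0 t)^3 * (A 1 t) + (1) * sR * (A 0 t)^3 * (A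 1 t)^2 + (-1) * sR * (A 0 t)^3 * (A 1 t)^3 + (2) * sR * (A 0 t)^3 * (A 1 t)^4 + (-1) * sR * (A 0 t)^4 + (3) * sR * (A 0 t)^4 * (A 1 t)^2 + (-2) * sR * (A 0 t)^4 * (A 1 t)^4 + (-2) * sR * (A 0 t)^5 + (-1) * sR * (A 0 t)^5 * (A 1 t) + (2) * sR * (A 0 t)^5 * (A 1 t)^2 + (2) * sR * (A 0 t)^6 + (-2) * sR * (A 0 t)^6 * (A 1 t)^2 + (-1) * sR^2 + (-1) * sR^2 * (A 1 t)^2 + (-1) * sR^2 * (A 0 t)^3 + (-1) * sR^2 * (A 0 t)^3 * (A 1 t)^2 + (1) * sR^2 * (A 0 t)^4 * (A 1 t)^2 + (-1) * sR^2 * (A 0 t)^5 + (1) * sR^2 * (A 0 t)^6 + (1) * sQ * (A 1 t) + (1) * sQ * (A 1 t)^2 + (2) * sQ * (A 1 t)^4 + (2) * sQ * (A 1 t)^5 + (-2) * sQ * (A 0 t) * (A 1 t) + (-3) * sQ * (A 0 t) * (A 1 t)^2 + (-2) * sQ * (A 0 t) * (A 1 t)^4 + (-2) * sQ * (A 0 t)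 * (A 1 t)^5 + (1) * sQ * (A 0 t)^2 + (-3) * sQ * (A 0 t)^2 * (A 1 t) + (5) * sQ * (A 0 t)^2 * (A 1 t)^2 + (-4) * sQ * (A 0 t)^2 * (A 1 t)^3 + (2) * sQ * (A 0 t)^2 * (A 1 t)^4 + (-2) * sQ * (A 0 t)^2 * (A 1 t)^5 + (-2) * sQ * (A 0 t)^3 * (A 1 t)^2 + (2) * sQ * (A 0 t)^3 * (A 1 t)^3 + (-2) * sQ * (A 0 t)^3 * (A 1 t)^4 + (4) * sQ * (A 0 t)^3 * (A 1 t)^5 + (2) * sQ * (A 0 t)^4 + (-1) * sQ * (A 0 t)^4 * (A 1 t) + (2) * sQ * (A 0 t)^4 * (A 1 t)^2 + (-2) * sQ * (A 0 t)^4 * (A 1 t)^3 + (1) * sQ * (A 0 t)^5 + (-2) * sQ * (A 0 t)^5 * (A 1 t) + (-2) * sQ * (A 0 t)^5 * (A 1 t)^2 + (4) * sQ * (A 0 t)^5 * (A 1 t)^3 + (-1) * sQ * sR + (-1) * sQ * sR * (A 1 t)^2 + (-1) * sQ * sR * (A 0 t) + (-3) * sQ * sR * (A 0 t) * (A 1 t)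 + (-1) * sQ * sR * (A 0 t) * (A 1 t)^2 + (-3) * sQ * sR * (A 0 t) * (A 1 t)^3 + (1) * sQ * sR * (A 0 t)^2 * (A 1 t) + (1) * sQ * sR * (A 0 t)^2 * (A 1 t)^2 + (1) * sQ * sR * (A 0 t)^2 * (A 1 t)^3 + (-1) * sQ * sR * (A 0 t)^3 + (-2) * sQ * sR * (A 0 t)^3 * (A 1 t) + (2) * sQ * sR * (A 0 t)^3 * (A 1 t)^2 + (-1) * sQ * sR * (A 0 t)^3 * (A 1 t)^3 + (1) * sQ * sR * (A 0 t)^4 + (1) * sQ * sR * (A 0 t)^4 * (A 1 t) + (2) * sQ * sR * (A 0 t)^5 + (-1) * sQ * sR * (A 0 t)^5 * (A 1 t) + (2) * sQ^2 + (3) * sQ^2 * (A 1 t) + (2) * sQ^2 * (A 1 t)^2 + (3) * sQ^2 * (A 1 t)^3 + (2) * sQ^2 * (A 1 t)^4 + (3) * sQ^2 * (A 0 t) + (-2) * sQ^2 * (A 0 t) * (A 1 t) + (2) * sQ^2 * (A 0 t) * (A 1 t)^2 + (-2) * sQ^2 * (A 0 t) * (A 1 t)^3 + (-1) * sQ^2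 * (A 0 t) * (A 1 t)^4 + (2) * sQ^2 * (A 0 t)^2 + (2) * sQ^2 * (A 0 t)^2 * (A 1 t) + (-1) * sQ^2 * (A 0 t)^2 * (A 1 t)^3 + (-4) * sQ^2 * (A 0 t)^2 * (A 1 t)^4 + (3) * sQ^2 * (A 0 t)^3 + (-2) * sQ^2 * (A 0 t)^3 * (A 1 t) + (-1) * sQ^2 * (A 0 t)^3 * (A 1 t)^2 + (3) * sQ^2 * (A 0 t)^4 + (-1) * sQ^2 * (A 0 t)^4 * (A 1 t) + (-4) * sQ^2 * (A 0 t)^4 * (A 1 t)^2 + (1) * sQ^2 * sR + (1) * sQ^2 * sR * (A 1 t)^2 + (1) * sQ^2 * sR * (A 0 t)^2 + (1) * sQ^2 * sR * (A 0 t)^2 * (A 1 t)^2 + (1) * sQ^2 * sR * (A 0 t)^4 + (2) * sQ^3 + (1) * sQ^3 * (A 1 t) + (2) * sQ^3 * (A 1 t)^2 + (1) * sQ^3 * (A 1 t)^3 + (1) * sQ^3 * (A 0 t) + (1) * sQ^3 * (A 0 t) * (A 1 t) + (1) * sQ^3 * (A 0 t) * (A 1 t)^2 + (1) * sQ^3 *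 (A 0 t) * (A 1 t)^3 + (2) * sQ^3 * (A 0 t)^2 + (1) * sQ^3 * (A 0 t)^2 * (A 1 t) + (1) * sQ^3 * (A 0 t)^3 + (1) * sQ^3 * (A 0 t)^3 * (A 1 t) + (-1) * sP + (-1) * sP * (A 1 t) + (-1) * sP * (A 1 t)^4 + (1) * sP * (A 1 t)^6 + (-1) * sP * (A 0 t) + (-1) * sP * (A 0 t) * (A 1 t)^3 + (1) * sP * (A 0 t) * (A 1 t)^4 + (-1) * sP * (A 0 t) * (A 1 t)^5 + (-1) * sP * (A 0 t)^2 * (A 1 t) + (1) * sP * (A 0 t)^2 * (A 1 t)^2 + (1) * sP * (A 0 t)^2 * (A 1 t)^4 + (2) * sP * (A 0 t)^2 * (A 1 t)^5 + (-2) * sP * (A 0 t)^2 * (A 1 t)^6 + (-1) * sP * (A 0 t)^3 + (1) * sP * (A 0 t)^3 * (A 1 t)^2 + (-1) * sP * (A 0 t)^3 * (A 1 t)^3 + (-1) * sP * (A 0 t)^4 + (-1) * sP * (A 0 t)^4 * (A 1 t) + (3) * sP * (A 0 t)^4 * (A 1 t)^2 + (2) * sP * (A 0 t)^4 * (A 1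 t)^3 + (-2) * sP * (A 0 t)^4 * (A 1 t)^4 + (-2) * sP * sR + (-2) * sP * sR * (A 1 t) + (-2) * sP * sR * (A 1 t)^3 + (-1) * sP * sR * (A 0 t) + (-1) * sP * sR * (A 0 t) * (A 1 t)^2 + (-1) * sP * sR * (A 0 t)^2 + (-1) * sP * sR * (A 0 t)^2 * (A 1 t) + (1) * sP * sR * (A 0 t)^2 * (A 1 t)^2 + (-1) * sP * sR * (A 0 t)^2 * (A 1 t)^3 + (3) * sP * sR * (A 0 t)^2 * (A 1 t)^4 + (-1) * sP * sR * (A 0 t)^3 + (-2) * sP * sR * (A 0 t)^4 + (-1) * sP * sR * (A 0 t)^4 * (A 1 t) + (3) * sP * sR * (A 0 t)^4 * (A 1 t)^2 + (-1) * sP * sR^2 + (-1) * sP * sR^2 * (A 1 t)^2 + (-1) * sP * sR^2 * (A 0 t)^2 + (-1) * sP * sR^2 * (A 0 t)^2 * (A 1 t)^2 + (-1) * sP * sR^2 * (A 0 t)^4 + (-1) * sP * sQ + (-2) * sP * sQ * (A 1 t) + (-1) * sP * sQ * (A 1 t)^3 + (1) * sP * sQ * (A 1 t)^4 + (1) * sP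 * sQ * (A 1 t)^5 + (-2) * sP * sQ * (A 0 t) * (A 1 t) + (-1) * sP * sQ * (A 0 t) * (A 1 t)^3 + (1) * sP * sQ * (A 0 t) * (A 1 t)^5 + (-1) * sP * sQ * (A 0 t)^2 + (-2) * sP * sQ * (A 0 t)^2 * (A 1 t) + (1) * sP * sQ * (A 0 t)^2 * (A 1 t)^2 + (1) * sP * sQ * (A 0 t)^2 * (A 1 t)^3 + (-2) * sP * sQ * (A 0 t)^3 * (A 1 t) + (1) * sP * sQ * (A 0 t)^3 * (A 1 t)^3 + (-2) * sP * sQ * sR + (-1) * sP * sQ * sR * (A 1 t) + (-2) * sP * sQ * sR * (A 1 t)^2 + (-1) * sP * sQ * sR * (A 1 t)^3 + (-1) * sP * sQ * sR * (A 0 t) + (-1) * sP * sQ * sR * (A 0 t) * (A 1 t) + (-1) * sP * sQ * sR * (A 0 t) * (A 1 t)^2 + (-1) * sP * sQ * sR * (A 0 t) * (A 1 t)^3 + (-2) * sP * sQ * sR * (A 0 t)^2 + (-1) * sP * sQ * sR * (A 0 t)^2 * (A 1 t) + (-1) * sP * sQ * sR * (A 0 t)^3 + (-1) * sP * sQ *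 sR * (A 0 t)^3 * (A 1 t)) * h2
    · -- characteristic not two
      have h2u : (2 : F) * ((A 0 t + A 1 t) - 1) ^ 2 = 0 := by
        linear_combination he1 - he2 - he3 - he4 + 2 * he5
      have h3 := (mul_eq_zero.mp h2u).resolve_left h2
      have h4 : (A 0 t + A 1 t - 1) * (A 0 t + A 1 t - 1) = 0 := by linear_combination h3
      linear_combination mul_self_eq_zero.mp h4
  -- now derive the row sums
  obtain ⟨S0, hS0⟩ : ∃ s, (∑ j, A 0 j) = s := ⟨_, rfl⟩
  have hQ2 : sQ = S0 - sP := by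
    rw [← hsQ, ← hsP, ← hS0, ← Finset.sum_sub_distrib]
    exact Finset.sum_congr rfl fun j _ => by linear_combination (A 0 j) * key j
  have hR2 : sR = (m : F) - 2 * S0 + sP := by
    rw [← hsR]
    calc ∑ j, A 1 j * A 1 j = ∑ j, (1 - 2 * A 0 j + A 0 j * A 0 j) :=
          Finset.sum_congr rfl fun j _ => by linear_combination (A 1 j + 1 - A 0 j) * key j
      _ = (m : F) - 2 * S0 + sP := by
          rw [Finset.sum_add_distrib, Finset.sum_sub_distrib, ← Finset.mul_sum, hS0, hsP]
          simp
  have hm2 : sP + 2 * sQ + sR + 2 = 0 := by linear_combination he1 - he2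
  have hMF : (m : F) = -2 := by linear_combination hm2 - 2 * hQ2 - hR2
  have hSsq : (S0 + 1) * (S0 + 1) = 0 := by
    linear_combination -he1 + (1 + sP) * hR2 + (1 + sP) * hMF - (sQ + S0 - sP) * hQ2
  have hS0v : S0 = -1 := by linear_combination mul_self_eq_zero.mp hSsq
  have hS1v : (∑ j, A 1 j) = -1 := by
    have hsum : (∑ j, A 0 j) + (∑ j, A 1 j) = (m : F) := by
      rw [← Finset.sum_add_distrib]
      calc ∑ j, (A 0 j + A 1 j) = ∑ _j : Fin m, (1 : F) :=
            Finset.sum_congr rfl fun j _ => key j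
        _ = (m : F) := by simp
    rw [hS0, hS0v, hMF] at hsum
    linear_combination hsum
  constructor
  · intro i
    rw [Fintype.sum_sum_type, Fin.sum_univ_two]
    fin_cases i
    · simp only [hGl, hGr]
      norm_num
      rw [hS0, hS0v]
      norm_num
    · simp only [hGl, hGr]
      norm_num
      rw [hS1v]
      norm_num
  · intro j
    rw [Fin.sum_univ_two]
    cases j with
    | inl b =>
      rw [hGl, hGl]
      fin_cases b <;> norm_num
    | inr t =>
      rw [hGr, hGr]
      exact key t
end
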